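/- arXiv:2104.14510 — 10 statements merged into one kernel-verified Lean document; each statement's English description precedes it below -/
import Mathlib

section
/- Let G be a simple graph and v a simplicial vertex of G such that d(N[v]) ≤ d(v), where d(U) is the number of edges with exactly one endpoint in U and d(v) = d({v}) = |N(v)|. Then the minimum size of a cluster edge deletion set of G equals the minimum size of a cluster edge deletion set of G − N[v] plus d(N[v]). -/
open scoped Classical

def IsClusterGraph {W : Type*} (H : SimpleGraph W) : Prop :=
  ∀ ⦃u v w : W⦄, H.Adj u v → H.Adj v w → u ≠ w → H.Adj u w

def closedNbhd {W : Type*} (G : SimpleGraph W) (v : W) : Set W :=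
  insert v (G.neighborSet v)

noncomputable def cut {W : Type*} (G : SimpleGraph W) (U : Set W) : ℕ :=
  {e ∈ G.edgeSet | ∃ a ∈ U, ∃ b ∉ U, e = s(a, b)}.ncard

noncomputable def clusterDelNum {W : Type*} (G : SimpleGraph W) : ℕ :=
  sInf {n | ∃ E ⊆ G.edgeSet, E.ncard = n ∧ IsClusterGraph (G.deleteEdges E)}

def IsSTCSolution {W : Type*} (G : SimpleGraph W) (E : Set (Sym2 W)) : Prop :=
  E ⊆ G.edgeSet ∧
    ∀ ⦃u w x : W⦄, (G.deleteEdges E).Adj u w → (G.deleteEdges E).Adj w x → u ≠ x →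
      ¬(G.deleteEdges E).Adj u x → G.Adj u x

noncomputable def stcNum {W : Type*} (G : SimpleGraph W) : ℕ :=
  sInf {n | ∃ E : Set (Sym2 W), IsSTCSolution G E ∧ E.ncard = n}

def P4At {W : Type*} (H : SimpleGraph W) (a b c d : W) : Prop :=
  a ≠ b ∧ a ≠ c ∧ a ≠ d ∧ b ≠ c ∧ b ≠ d ∧ c ≠ d ∧
    H.Adj a b ∧ H.Adj b c ∧ H.Adj c d ∧ ¬H.Adj a c ∧ ¬H.Adj b d ∧ ¬H.Adj a d

def C4At {W : Type*} (H : SimpleGraph W) (a b c d : W) : Prop :=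
  a ≠ b ∧ a ≠ c ∧ a ≠ d ∧ b ≠ c ∧ b ≠ d ∧ c ≠ d ∧
    H.Adj a b ∧ H.Adj b c ∧ H.Adj c d ∧ H.Adj d a ∧ ¬H.Adj a c ∧ ¬H.Adj b d

def TwoK2At {W : Type*} (H : SimpleGraph W) (a b c d : W) : Prop :=
  a ≠ b ∧ a ≠ c ∧ a ≠ d ∧ b ≠ c ∧ b ≠ d ∧ c ≠ d ∧
    H.Adj a b ∧ H.Adj c d ∧ ¬H.Adj a c ∧ ¬H.Adj a d ∧ ¬H.Adj b c ∧ ¬H.Adj b d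

def C5At {W : Type*} (H : SimpleGraph W) (a b c d e : W) : Prop :=
  a ≠ b ∧ a ≠ c ∧ a ≠ d ∧ a ≠ e ∧ b ≠ c ∧ b ≠ d ∧ b ≠ e ∧ c ≠ d ∧ c ≠ e ∧ d ≠ e ∧
    H.Adj a b ∧ H.Adj b c ∧ H.Adj c d ∧ H.Adj d e ∧ H.Adj e a ∧
    ¬H.Adj a c ∧ ¬H.Adj a d ∧ ¬H.Adj b d ∧ ¬H.Adj b e ∧ ¬H.Adj c e

def IsTriviallyPerfect {W : Type*} (H : SimpleGraph W) : Prop :=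
  (¬∃ a b c d, P4At H a b c d) ∧ (¬∃ a b c d, C4At H a b c d)

def IsIndep {W : Type*} (H : SimpleGraph W) (s : Set W) : Prop :=
  s.Pairwise fun a b => ¬H.Adj a b

def IsSplit {W : Type*} (H : SimpleGraph W) : Prop :=
  ∃ C : Set W, H.IsClique C ∧ IsIndep H Cᶜ

def IsPseudoSplit {W : Type*} (H : SimpleGraph W) : Prop :=
  (¬∃ a b c d, TwoK2At H a b c d) ∧ (¬∃ a b c d, C4At H a b c d)

noncomputable def sedNum {W : Type*} (G : SimpleGraph W) : ℕ :=
  sInf {n | ∃ E ⊆ G.edgeSet, E.ncard = n ∧ IsSplit (G.deleteEdges E)}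

noncomputable def psdNum {W : Type*} (G : SimpleGraph W) : ℕ :=
  sInf {n | ∃ E ⊆ G.edgeSet, E.ncard = n ∧ IsPseudoSplit (G.deleteEdges E)}

def IsTPCompletion {W : Type*} (G Gh : SimpleGraph W) : Prop :=
  G ≤ Gh ∧ IsTriviallyPerfect Gh

def IsMinimalTPCompletion {W : Type*} (G Gh : SimpleGraph W) : Prop :=
  IsTPCompletion G Gh ∧
    ∀ G' : SimpleGraph W, G ≤ G' → G' ≤ Gh → IsTriviallyPerfect G' → G' = Gh

noncomputable def tpcNum {W : Type*} (G : SimpleGraph W) : ℕ :=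
  sInf {n | ∃ Gh : SimpleGraph W, IsTPCompletion G Gh ∧ (Gh.edgeSet \ G.edgeSet).ncard = n}

def IsMinTPCompletion {W : Type*} (G Gh : SimpleGraph W) : Prop :=
  IsTPCompletion G Gh ∧
    ∀ G' : SimpleGraph W, IsTPCompletion G G' →
      (Gh.edgeSet \ G.edgeSet).ncard ≤ (G'.edgeSet \ G.edgeSet).ncard

def IsModule {W : Type*} (G : SimpleGraph W) (M : Set W) : Prop :=
  ∀ a ∈ M, ∀ b ∈ M, ∀ x ∉ M, (G.Adj a x ↔ G.Adj b x)


private lemma ncard_prod' {α β : Type*} (s : Set α) (t : Set β) :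
    (s ×ˢ t).ncard = s.ncard * t.ncard := by
  have h := Nat.card_congr (Equiv.Set.prod s t)
  rw [Nat.card_prod] at h
  simpa [Nat.card_coe_set_eq] using h

private lemma mem_map_val_iff {V : Type*} {s : Set V} (E : Set (Sym2 ↥s)) (a b : V) :
    s(a, b) ∈ Sym2.map (Subtype.val : ↥s → V) '' E ↔
      ∃ (ha : a ∈ s) (hb : b ∈ s), s(⟨a, ha⟩, ⟨b, hb⟩) ∈ E := by
  constructor
  · rintro ⟨e, he, heq⟩
    induction e using Sym2.ind with
    | _ p q =>
      rw [Sym2.map_pair_eq, Sym2.eq_iff] at heq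
      rcases heq with ⟨h1, h2⟩ | ⟨h1, h2⟩
      · subst h1; subst h2
        exact ⟨p.2, q.2, he⟩
      · subst h1; subst h2
        exact ⟨q.2, p.2, by rwa [Sym2.eq_swap]⟩
  · rintro ⟨ha, hb, h⟩
    exact ⟨_, h, Sym2.map_pair_eq _ _ _⟩

private lemma cut_eq_pairs {V : Type*} (G : SimpleGraph V) (U : Set V) :
    cut G U = {p : V × V | p.1 ∈ U ∧ p.2 ∉ U ∧ G.Adj p.1 p.2}.ncard := by
  have himg : (fun p : V × V => s(p.1, p.2)) '' {p : V × V | p.1 ∈ U ∧ p.2 ∉ U ∧ G.Adj p.1 p.2}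
      = {e ∈ G.edgeSet | ∃ a ∈ U, ∃ b ∉ U, e = s(a, b)} := by
    ext e
    constructor
    · rintro ⟨⟨a, b⟩, ⟨ha, hb, hadj⟩, rfl⟩
      exact ⟨(G.mem_edgeSet).mpr hadj, a, ha, b, hb, rfl⟩
    · rintro ⟨he, a, ha, b, hb, rfl⟩
      exact ⟨(a, b), ⟨ha, hb, (G.mem_edgeSet).mp he⟩, rfl⟩
  have hinj : Set.InjOn (fun p : V × V => s(p.1, p.2))
      {p : V × V | p.1 ∈ U ∧ p.2 ∉ U ∧ G.Adj p.1 p.2} := by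
    rintro ⟨a, b⟩ ⟨ha, hb, _⟩ ⟨c, d⟩ ⟨hc, hd, _⟩ h
    simp only [Sym2.eq_iff] at h
    rcases h with ⟨rfl, rfl⟩ | ⟨rfl, rfl⟩
    · rfl
    · exact absurd hc hb
  rw [cut, ← himg, Set.ncard_image_of_injOn hinj]

private lemma clusterDelNum_mem {W : Type*} (H : SimpleGraph W) :
    ∃ E ⊆ H.edgeSet, E.ncard = clusterDelNum H ∧ IsClusterGraph (H.deleteEdges E) := by
  have hne : {n | ∃ E ⊆ H.edgeSet, E.ncard = n ∧ IsClusterGraph (H.deleteEdges E)}.Nonempty := by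
    refine ⟨H.edgeSet.ncard, H.edgeSet, le_refl _, rfl, ?_⟩
    intro u v w h1 _ _
    rw [SimpleGraph.deleteEdges_adj] at h1
    exact (h1.2 ((H.mem_edgeSet).mpr h1.1)).elim
  obtain ⟨E, h1, h2, h3⟩ := Nat.sInf_mem hne
  exact ⟨E, h1, h2, h3⟩

private lemma cut_le_cut_cluster {V : Type*} [Fintype V] (G : SimpleGraph V) (v : V)
    (hsimp : G.IsClique (closedNbhd G v))
    (hd : cut G (closedNbhd G v) ≤ cut G {v}) {C : Set V}
    (hvC : v ∈ C) (hCN : C ⊆ closedNbhd G v) :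
    cut G (closedNbhd G v) ≤ cut G C := by
  set N := closedNbhd G v with hN
  have hvN : v ∈ N := hCN hvC
  set PN := {p : V × V | p.1 ∈ N ∧ p.2 ∉ N ∧ G.Adj p.1 p.2} with hPN
  set PC := {p : V × V | p.1 ∈ C ∧ p.2 ∉ C ∧ G.Adj p.1 p.2} with hPC
  set A := {p ∈ PN | p.1 ∈ C} with hA
  set B := {p ∈ PN | p.1 ∉ C} with hB
  set Q := C ×ˢ (N \ C) with hQ
  have hPNsplit : PN = A ∪ B := by
    ext p; by_cases h : p.1 ∈ C <;> simp [hA, hB, hPN, h]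
  have hABdisj : Disjoint A B := by
    rw [Set.disjoint_left]
    rintro p ⟨_, h1⟩ ⟨_, h2⟩
    exact h2 h1
  have hcutN : cut G N = A.ncard + B.ncard := by
    rw [cut_eq_pairs, ← hPN, hPNsplit,
      Set.ncard_union_eq hABdisj (Set.toFinite _) (Set.toFinite _)]
  have hAQdisj : Disjoint A Q := by
    rw [Set.disjoint_left]
    rintro p ⟨⟨_, h1, _⟩, _⟩ ⟨_, h2, _⟩
    exact h1 h2
  have hsub : A ∪ Q ⊆ PC := by
    rintro p (⟨⟨h1, h2, h3⟩, h4⟩ | ⟨h1, h2⟩)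
    · exact ⟨h4, fun hc => h2 (hCN hc), h3⟩
    · refine ⟨h1, h2.2, hsimp (hCN h1) h2.1 ?_⟩
      intro heq
      exact h2.2 (heq ▸ h1)
  have hcutC : A.ncard + Q.ncard ≤ cut G C := by
    rw [cut_eq_pairs, ← hPC, ← Set.ncard_union_eq hAQdisj (Set.toFinite _) (Set.toFinite _)]
    exact Set.ncard_le_ncard hsub (Set.toFinite _)
  have hQcard : Q.ncard = C.ncard * (N \ C).ncard := ncard_prod' _ _
  have hPv : cut G {v} = (N \ {v}).ncard := by
    rw [cut_eq_pairs]
    have himg : (fun b => (v, b)) '' (N \ {v})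
        = {p : V × V | p.1 ∈ ({v} : Set V) ∧ p.2 ∉ ({v} : Set V) ∧ G.Adj p.1 p.2} := by
      ext ⟨a, b⟩
      constructor
      · rintro ⟨b', ⟨hbN, hbv⟩, heq⟩
        obtain ⟨rfl, rfl⟩ := Prod.mk.injEq .. |>.mp heq
        refine ⟨rfl, by simpa using hbv, ?_⟩
        rcases (Set.mem_insert_iff).mp hbN with h | h
        · exact absurd h (by simpa using hbv)
        · exact h
      · rintro ⟨ha, hb, hadj⟩
        have ha' : a = v := by simpa using ha
        subst ha'
        exact ⟨b, ⟨Set.mem_insert_of_mem _ hadj, by simpa using hadj.ne'⟩, rfl⟩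
    rw [← himg, Set.ncard_image_of_injOn]
    rintro x _ y _ h
    simpa using (Prod.mk.injEq .. |>.mp h).2
  have hBle : B.ncard ≤ (N \ {v}).ncard := by
    calc B.ncard ≤ PN.ncard := Set.ncard_le_ncard (Set.sep_subset _ _) (Set.toFinite _)
      _ = cut G N := (by rw [cut_eq_pairs, hPN])
      _ ≤ cut G {v} := hd
      _ = _ := hPv
  have hNone : (N \ {v}).ncard + 1 = N.ncard := Set.ncard_diff_singleton_add_one hvN
  have hNsplit : (N \ C).ncard + C.ncard = N.ncard := Set.ncard_diff_add_ncard_of_subset hCN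
  have hCpos : 1 ≤ C.ncard := (Set.ncard_pos).mpr ⟨v, hvC⟩
  by_cases hk : N \ C = ∅
  · have hB0 : B = ∅ := by
      ext p
      simp only [Set.mem_empty_iff_false, iff_false]
      rintro ⟨⟨h1, _, _⟩, h2⟩
      have hmem : p.1 ∈ N \ C := ⟨h1, h2⟩
      rw [hk] at hmem
      exact hmem
    rw [hcutN, hB0, Set.ncard_empty]
    omega
  · have hkpos : 1 ≤ (N \ C).ncard :=
      (Set.ncard_pos).mpr (Set.nonempty_iff_ne_empty.mpr hk)
    obtain ⟨k', hk'⟩ := Nat.exists_eq_add_of_le hkpos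
    have hmul : C.ncard * (1 + k') = C.ncard + C.ncard * k' := by ring
    have hle : k' ≤ C.ncard * k' := Nat.le_mul_of_pos_left k' hCpos
    rw [hk'] at hQcard hNsplit
    omega

theorem stmt1 {V : Type*} [Fintype V] (G : SimpleGraph V) (v : V)
    (hsimp : G.IsClique (closedNbhd G v))
    (hd : cut G (closedNbhd G v) ≤ cut G {v}) :
    clusterDelNum G = clusterDelNum (G.induce (closedNbhd G v)ᶜ) + cut G (closedNbhd G v) := by
  classical
  set N := closedNbhd G v with hNdef
  have hvN : v ∈ N := Set.mem_insert _ _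
  set G' := G.induce Nᶜ with hG'def
  set f : Sym2 ↥(Nᶜ) → Sym2 V := Sym2.map Subtype.val with hfdef
  have hfinj : Function.Injective f := Sym2.map.injective Subtype.val_injective
  set SN : Set (Sym2 V) := {e ∈ G.edgeSet | ∃ a ∈ N, ∃ b ∉ N, e = s(a, b)} with hSNdef
  have hcutN : cut G N = SN.ncard := rfl
  have hSNmem : ∀ a b : V, s(a, b) ∈ SN ↔
      G.Adj a b ∧ ((a ∈ N ∧ b ∉ N) ∨ (b ∈ N ∧ a ∉ N)) := by
    intro a b
    constructor
    · rintro ⟨he, c, hc, d, hd, heq⟩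
      rw [Sym2.eq_iff] at heq
      refine ⟨(G.mem_edgeSet).mp he, ?_⟩
      rcases heq with ⟨rfl, rfl⟩ | ⟨rfl, rfl⟩
      · exact Or.inl ⟨hc, hd⟩
      · exact Or.inr ⟨hc, hd⟩
    · rintro ⟨hadj, ⟨h1, h2⟩ | ⟨h1, h2⟩⟩
      · exact ⟨(G.mem_edgeSet).mpr hadj, a, h1, b, h2, rfl⟩
      · exact ⟨(G.mem_edgeSet).mpr hadj, b, h1, a, h2, Sym2.eq_swap⟩
  have hub : clusterDelNum G ≤ clusterDelNum G' + cut G N := by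
    obtain ⟨E', hE'sub, hE'card, hE'clu⟩ := clusterDelNum_mem G'
    set F : Set (Sym2 V) := f '' E' ∪ SN with hFdef
    have himgE : ∀ a b : V, s(a, b) ∈ f '' E' → G.Adj a b ∧ a ∉ N ∧ b ∉ N := by
      intro a b h
      rw [hfdef, mem_map_val_iff] at h
      obtain ⟨ha, hb, h⟩ := h
      have hadj := hE'sub h
      rw [SimpleGraph.mem_edgeSet] at hadj
      exact ⟨by simpa [hG'def] using hadj, ha, hb⟩
    have hFadjN : ∀ {a b : V}, (G.deleteEdges F).Adj a b → (a ∈ N ↔ b ∈ N) := by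
      intro a b h
      rw [SimpleGraph.deleteEdges_adj] at h
      constructor <;> intro hm <;> by_contra hm'
      · exact h.2 (Or.inr ((hSNmem a b).mpr ⟨h.1, Or.inl ⟨hm, hm'⟩⟩))
      · exact h.2 (Or.inr ((hSNmem a b).mpr ⟨h.1, Or.inr ⟨hm, hm'⟩⟩))
    have hFsub : F ⊆ G.edgeSet := by
      intro e he
      induction e using Sym2.ind with
      | _ a b =>
        rcases he with he | he
        · exact (G.mem_edgeSet).mpr (himgE a b he).1
        · exact (G.mem_edgeSet).mpr ((hSNmem a b).mp he).1
    have hdisj : Disjoint (f '' E') SN := by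
      rw [Set.disjoint_left]
      intro e he hsn
      induction e using Sym2.ind with
      | _ a b =>
        obtain ⟨_, ha, hb⟩ := himgE a b he
        rcases ((hSNmem a b).mp hsn).2 with ⟨h1, _⟩ | ⟨h1, _⟩
        exacts [ha h1, hb h1]
    have hclu : IsClusterGraph (G.deleteEdges F) := by
      intro u w x h1 h2 hux
      have h1d := h1; have h2d := h2
      rw [SimpleGraph.deleteEdges_adj] at h1d h2d
      by_cases hu : u ∈ N
      · have hw : w ∈ N := (hFadjN h1).1 hu
        have hx : x ∈ N := (hFadjN h2).1 hw
        rw [SimpleGraph.deleteEdges_adj]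
        refine ⟨hsimp hu hx hux, ?_⟩
        rintro (hm | hm)
        · exact (himgE u x hm).2.1 hu
        · rcases ((hSNmem u x).mp hm).2 with ⟨_, hb2⟩ | ⟨_, hb2⟩
          exacts [hb2 hx, hb2 hu]
      · have hw : w ∉ N := fun hw => hu ((hFadjN h1).2 hw)
        have hx : x ∉ N := fun hx => hw ((hFadjN h2).2 hx)
        have ha1 : (G'.deleteEdges E').Adj ⟨u, hu⟩ ⟨w, hw⟩ := by
          rw [SimpleGraph.deleteEdges_adj]
          refine ⟨by simpa [hG'def] using h1d.1, fun hm => h1d.2 (Or.inl ?_)⟩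
          rw [hfdef, mem_map_val_iff]
          exact ⟨hu, hw, hm⟩
        have ha2 : (G'.deleteEdges E').Adj ⟨w, hw⟩ ⟨x, hx⟩ := by
          rw [SimpleGraph.deleteEdges_adj]
          refine ⟨by simpa [hG'def] using h2d.1, fun hm => h2d.2 (Or.inl ?_)⟩
          rw [hfdef, mem_map_val_iff]
          exact ⟨hw, hx, hm⟩
        have hres := hE'clu ha1 ha2 (fun h => hux (congrArg Subtype.val h))
        rw [SimpleGraph.deleteEdges_adj] at hres
        rw [SimpleGraph.deleteEdges_adj]
        refine ⟨by simpa [hG'def] using hres.1, ?_⟩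
        rintro (hm | hm)
        · rw [hfdef, mem_map_val_iff] at hm
          obtain ⟨_, _, hm⟩ := hm
          exact hres.2 hm
        · rcases ((hSNmem u x).mp hm).2 with ⟨hh1, _⟩ | ⟨hh1, _⟩
          exacts [hu hh1, hx hh1]
    refine Nat.sInf_le ⟨F, hFsub, ?_, hclu⟩
    rw [hFdef, Set.ncard_union_eq hdisj (Set.toFinite _) (Set.toFinite _),
      Set.ncard_image_of_injective _ hfinj, hE'card, hcutN]
  have hlb : clusterDelNum G' + cut G N ≤ clusterDelNum G := by
    obtain ⟨E, hEsub, hEcard, hEclu⟩ := clusterDelNum_mem G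
    set Et : Set (Sym2 V) := {e ∈ E | ∃ a ∈ N, a ∈ e} with hEt
    have hEtsub : Et ⊆ E := Set.sep_subset _ _
    have hsplit : (E \ Et).ncard + Et.ncard = E.ncard :=
      Set.ncard_diff_add_ncard_of_subset hEtsub
    set E₀ : Set (Sym2 ↥(Nᶜ)) := {e ∈ G'.edgeSet | f e ∈ E} with hE₀
    have hkey : ∀ p q : ↥(Nᶜ),
        (G'.deleteEdges E₀).Adj p q ↔ (G.deleteEdges E).Adj p.1 q.1 := by
      intro p q
      rw [SimpleGraph.deleteEdges_adj, SimpleGraph.deleteEdges_adj]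
      constructor
      · rintro ⟨hadj, hm⟩
        refine ⟨by simpa [hG'def] using hadj, fun hE2 => hm ⟨(G'.mem_edgeSet).mpr hadj, ?_⟩⟩
        rw [hfdef, Sym2.map_pair_eq]
        exact hE2
      · rintro ⟨hadj, hm⟩
        refine ⟨by simpa [hG'def] using hadj, fun h => hm ?_⟩
        have := h.2
        rwa [hfdef, Sym2.map_pair_eq] at this
    have hclu₀ : IsClusterGraph (G'.deleteEdges E₀) := by
      intro p q r h1 h2 hpr
      rw [hkey] at h1 h2 ⊢
      exact hEclu h1 h2 (fun h => hpr (Subtype.ext h))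
    have hE₀le : clusterDelNum G' ≤ (E \ Et).ncard := by
      have hsub0 : f '' E₀ ⊆ E \ Et := by
        intro e he
        induction e using Sym2.ind with
        | _ a b =>
          rw [hfdef, mem_map_val_iff] at he
          obtain ⟨ha, hb, he⟩ := he
          obtain ⟨_, heE⟩ := he
          have heE' : s(a, b) ∈ E := by rwa [hfdef, Sym2.map_pair_eq] at heE
          refine ⟨heE', ?_⟩
          rintro ⟨_, c, hcN, hce⟩
          rcases Sym2.mem_iff.mp hce with rfl | rfl
          · exact ha hcN
          · exact hb hcN
      have h1 : E₀.ncard ≤ (E \ Et).ncard := by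
        rw [← Set.ncard_image_of_injective E₀ hfinj]
        exact Set.ncard_le_ncard hsub0 (Set.toFinite _)
      exact le_trans (Nat.sInf_le ⟨E₀, Set.sep_subset _ _, rfl, hclu₀⟩) h1
    set C : Set V := closedNbhd (G.deleteEdges E) v with hC
    have hvC : v ∈ C := Set.mem_insert _ _
    have hCN : C ⊆ N := by
      intro u hu
      rcases Set.mem_insert_iff.mp hu with rfl | hu
      · exact hvN
      · have h1 : (G.deleteEdges E).Adj v u := hu
        rw [SimpleGraph.deleteEdges_adj] at h1
        exact Set.mem_insert_of_mem _ h1.1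
    have hcross : ∀ a ∈ C, ∀ b ∉ C, G.Adj a b → s(a, b) ∈ E := by
      intro a ha b hb hadj
      by_contra hne
      have hH : (G.deleteEdges E).Adj a b := (SimpleGraph.deleteEdges_adj ..).mpr ⟨hadj, hne⟩
      rcases Set.mem_insert_iff.mp ha with rfl | ha'
      · exact hb (Set.mem_insert_of_mem _ hH)
      · have hva : (G.deleteEdges E).Adj v a := ha'
        by_cases hbv : b = v
        · exact hb (hbv ▸ hvC)
        · exact hb (Set.mem_insert_of_mem _ (hEclu hva hH (fun h => hbv h.symm)))
    have hTle : cut G C ≤ Et.ncard := by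
      rw [cut]
      refine Set.ncard_le_ncard ?_ (Set.toFinite _)
      rintro e ⟨heG, a, ha, b, hb, rfl⟩
      exact ⟨hcross a ha b hb ((G.mem_edgeSet).mp heG), a, hCN ha, Sym2.mem_mk_left _ _⟩
    have hcut_le : cut G N ≤ Et.ncard :=
      le_trans (cut_le_cut_cluster G v hsimp hd hvC hCN) hTle
    have hfin := Nat.add_le_add hE₀le hcut_le
    omega
  exact le_antisymm hub hlb
end

section
/- Let G be a simple graph with a minimum cluster edge deletion set E₋ of size at most k, and suppose no simplicial vertex v of G satisfies d(N[v]) ≤ d(v). Then |V(G)| ≤ 2k. -/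
open scoped Classical

instance mySym2Nonempty {V : Type*} [Nonempty V] : Nonempty (Sym2 V) :=
  ⟨s(Classical.arbitrary V, Classical.arbitrary V)⟩

noncomputable def crossE {V : Type*} (E : Set (Sym2 V)) (C : Set V) : Set (Sym2 V) :=
  {e ∈ E | ∃ a ∈ C, ∃ b ∉ C, e = s(a, b)}

noncomputable def epC {V : Type*} [Nonempty V] (C : Set V) (e : Sym2 V) : V :=
  Classical.epsilon fun a => a ∈ C ∧ a ∈ e

noncomputable def ep2 {V : Type*} [Nonempty V] (e : Sym2 V) : V :=
  Classical.epsilon fun a => a ∈ e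

noncomputable def gE {V : Type*} [Nonempty V] (E : Set (Sym2 V)) (C : Set V) : V → Sym2 V :=
  Classical.epsilon fun g : V → Sym2 V => Set.InjOn g C ∧ ∀ v ∈ C, g v ∈ crossE E C

noncomputable def Afun {V : Type*} [Nonempty V] (G : SimpleGraph V) (E : Set (Sym2 V)) (v : V) :
    Sym2 V × V :=
  if h : ∃ u, (∀ e ∈ E, u ∉ e) ∧ v ∈ closedNbhd G u then
    (gE E (closedNbhd G h.choose) v,
      epC (closedNbhd G h.choose) (gE E (closedNbhd G h.choose) v))
  else
    (Classical.epsilon (fun e => e ∈ E ∧ v ∈ e), v)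

theorem stmt2 {V : Type*} [Fintype V] (G : SimpleGraph V) (k : ℕ) (E : Set (Sym2 V))
    (hE : E ⊆ G.edgeSet) (hcluster : IsClusterGraph (G.deleteEdges E))
    (hmin : ∀ E' ⊆ G.edgeSet, IsClusterGraph (G.deleteEdges E') → E.ncard ≤ E'.ncard)
    (hk : E.ncard ≤ k)
    (hnosimp : ¬∃ v : V, G.IsClique (closedNbhd G v) ∧ cut G (closedNbhd G v) ≤ cut G {v}) :
    Fintype.card V ≤ 2 * k := by
  obtain hV | hV := isEmpty_or_nonempty V
  · simp [Fintype.card_eq_zero]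
  set G' := G.deleteEdges E with hG'
  have hGle : ∀ {a b : V}, G'.Adj a b → G.Adj a b := fun h =>
    (SimpleGraph.deleteEdges_adj.mp h).1
  have hadj : ∀ u x : V, (∀ e ∈ E, u ∉ e) → (G.Adj u x ↔ G'.Adj u x) := by
    intro u x hu
    rw [hG', SimpleGraph.deleteEdges_adj]
    exact ⟨fun h => ⟨h, fun he => hu _ he (Sym2.mem_mk_left u x)⟩, fun h => h.1⟩
  have hRsymm : ∀ {a b : V}, (a = b ∨ G'.Adj a b) → (b = a ∨ G'.Adj b a) := by
    rintro a b (rfl | h)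
    · exact Or.inl rfl
    · exact Or.inr h.symm
  have hRtrans : ∀ {a b c : V}, (a = b ∨ G'.Adj a b) → (b = c ∨ G'.Adj b c) →
      (a = c ∨ G'.Adj a c) := by
    rintro a b c (rfl | hab) (rfl | hbc)
    · exact Or.inl rfl
    · exact Or.inr hbc
    · exact Or.inr hab
    · by_cases hac : a = c
      · exact Or.inl hac
      · exact Or.inr (hcluster hab hbc hac)
  have hCmem : ∀ u : V, (∀ e ∈ E, u ∉ e) → ∀ x : V,
      (x ∈ closedNbhd G u ↔ (u = x ∨ G'.Adj u x)) := by
    intro u hu x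
    simp only [closedNbhd, Set.mem_insert_iff, SimpleGraph.mem_neighborSet]
    rw [hadj u x hu]
    constructor
    · rintro (rfl | h)
      exacts [Or.inl rfl, Or.inr h]
    · rintro (rfl | h)
      exacts [Or.inl rfl, Or.inr h]
  have hdisj : ∀ u u' : V, (∀ e ∈ E, u ∉ e) → (∀ e ∈ E, u' ∉ e) →
      ∀ x : V, x ∈ closedNbhd G u → x ∈ closedNbhd G u' →
      closedNbhd G u = closedNbhd G u' := by
    intro u u' hu hu' x hx hx'
    have h1 := (hCmem u hu x).mp hx
    have h2 := (hCmem u' hu' x).mp hx'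
    have huu' := hRtrans h1 (hRsymm h2)
    ext y
    rw [hCmem u hu y, hCmem u' hu' y]
    exact ⟨fun h => hRtrans (hRsymm huu') h, fun h => hRtrans huu' h⟩
  have hClique : ∀ u : V, (∀ e ∈ E, u ∉ e) → G.IsClique (closedNbhd G u) := by
    intro u hu
    rw [SimpleGraph.isClique_iff]
    intro a ha b hb hab
    have h1 := (hCmem u hu a).mp ha
    have h2 := (hCmem u hu b).mp hb
    rcases hRtrans (hRsymm h1) h2 with rfl | h
    · exact absurd rfl hab
    · exact hGle h
  have hCross : ∀ u : V, (∀ e ∈ E, u ∉ e) → ∀ e ∈ G.edgeSet,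
      (∃ a ∈ closedNbhd G u, ∃ b ∉ closedNbhd G u, e = s(a, b)) → e ∈ E := by
    rintro u hu e he ⟨a, ha, b, hb, rfl⟩
    by_contra heE
    have hadjab : G'.Adj a b := by
      rw [hG', SimpleGraph.deleteEdges_adj]
      exact ⟨G.mem_edgeSet.mp he, heE⟩
    have h1 := (hCmem u hu a).mp ha
    have h2 : u = b ∨ G'.Adj u b := hRtrans h1 (Or.inr hadjab)
    exact hb ((hCmem u hu b).mpr h2)
  have hcutv : ∀ v : V, cut G {v} = (G.neighborSet v).ncard := by
    intro v
    have hset : {e ∈ G.edgeSet | ∃ a ∈ ({v} : Set V), ∃ b ∉ ({v} : Set V), e = s(a, b)}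
        = (fun b => s(v, b)) '' G.neighborSet v := by
      ext e
      simp only [Set.mem_sep_iff, Set.mem_image, Set.mem_singleton_iff,
        SimpleGraph.mem_neighborSet]
      constructor
      · rintro ⟨he, a, rfl, b, hb, rfl⟩
        exact ⟨b, G.mem_edgeSet.mp he, rfl⟩
      · rintro ⟨b, hadjb, rfl⟩
        exact ⟨G.mem_edgeSet.mpr hadjb, v, rfl, b,
          (G.ne_of_adj hadjb).symm, rfl⟩
    rw [cut, hset, Set.ncard_image_of_injOn]
    intro b hb b' hb' h
    exact Sym2.congr_right.mp h
  have hcutC : ∀ u : V, (∀ e ∈ E, u ∉ e) →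
      cut G (closedNbhd G u) = (crossE E (closedNbhd G u)).ncard := by
    intro u hu
    rw [cut, crossE]
    congr 1
    ext e
    simp only [Set.mem_sep_iff]
    constructor
    · rintro ⟨he, hx⟩
      exact ⟨hCross u hu e he hx, hx⟩
    · rintro ⟨he, hx⟩
      exact ⟨hE he, hx⟩
  have hcard : ∀ u : V, (∀ e ∈ E, u ∉ e) →
      (closedNbhd G u).ncard ≤ (crossE E (closedNbhd G u)).ncard := by
    intro u hu
    have h1 : ¬ (cut G (closedNbhd G u) ≤ cut G {u}) := fun h =>
      hnosimp ⟨u, hClique u hu, h⟩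
    have h3 : (closedNbhd G u).ncard = (G.neighborSet u).ncard + 1 := by
      rw [closedNbhd, Set.ncard_insert_of_notMem (by simp)]
    rw [h3, ← hcutv u, ← hcutC u hu]
    omega
  have hgE : ∀ u : V, (∀ e ∈ E, u ∉ e) →
      Set.InjOn (gE E (closedNbhd G u)) (closedNbhd G u) ∧
        ∀ v ∈ closedNbhd G u, gE E (closedNbhd G u) v ∈ crossE E (closedNbhd G u) := by
    intro u hu
    have hfin := hcard u hu
    have hc : Fintype.card (closedNbhd G u) ≤ Fintype.card (crossE E (closedNbhd G u)) := by
      rwa [← Nat.card_coe_set_eq, ← Nat.card_coe_set_eq, Nat.card_eq_fintype_card,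
        Nat.card_eq_fintype_card] at hfin
    obtain ⟨f⟩ := Function.Embedding.nonempty_of_card_le hc
    unfold gE
    apply Classical.epsilon_spec
      (p := fun g : V → Sym2 V => Set.InjOn g (closedNbhd G u) ∧
        ∀ v ∈ closedNbhd G u, g v ∈ crossE E (closedNbhd G u))
    refine ⟨fun x => if hx : x ∈ closedNbhd G u then (f ⟨x, hx⟩ : Sym2 V)
      else Classical.arbitrary _, ?_, ?_⟩
    · intro x hx y hy hxy
      simp only [dif_pos hx, dif_pos hy] at hxy
      have := f.injective (Subtype.ext hxy)
      exact congrArg Subtype.val this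
    · intro v hv
      simp only [dif_pos hv]
      exact (f ⟨v, hv⟩).2
  have hepC : ∀ (C : Set V) (e : Sym2 V), e ∈ crossE E C → epC C e ∈ C ∧ epC C e ∈ e := by
    rintro C e ⟨heE, a, ha, b, hb, rfl⟩
    unfold epC
    exact Classical.epsilon_spec (p := fun x => x ∈ C ∧ x ∈ s(a, b))
      ⟨a, ha, Sym2.mem_mk_left a b⟩
  have hAspec : ∀ v : V, (Afun G E v).1 ∈ E ∧ (Afun G E v).2 ∈ (Afun G E v).1 := by
    intro v
    unfold Afun
    split_ifs with h
    · have hspec := h.choose_spec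
      have hmem : gE E (closedNbhd G h.choose) v ∈ crossE E (closedNbhd G h.choose) :=
        (hgE _ hspec.1).2 v hspec.2
      exact ⟨hmem.1, (hepC _ _ hmem).2⟩
    · have hv : ∃ e, e ∈ E ∧ v ∈ e := by
        by_contra hc
        push_neg at hc
        exact h ⟨v, fun e he => hc e he, Set.mem_insert v _⟩
      have := Classical.epsilon_spec (p := fun e : Sym2 V => e ∈ E ∧ v ∈ e) hv
      exact ⟨this.1, this.2⟩
  have hAinj : Function.Injective (Afun G E) := by
    intro v v' hvv'
    unfold Afun at hvv'
    by_cases h : ∃ u, (∀ e ∈ E, u ∉ e) ∧ v ∈ closedNbhd G u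
    · by_cases h' : ∃ u, (∀ e ∈ E, u ∉ e) ∧ v' ∈ closedNbhd G u
      · rw [dif_pos h, dif_pos h'] at hvv'
        have hu := h.choose_spec
        have hu' := h'.choose_spec
        have hgc := hgE _ hu.1
        have hgc' := hgE _ hu'.1
        have h1 : gE E (closedNbhd G h.choose) v = gE E (closedNbhd G h'.choose) v' :=
          congrArg Prod.fst hvv'
        have h2 : epC (closedNbhd G h.choose) (gE E (closedNbhd G h.choose) v)
            = epC (closedNbhd G h'.choose) (gE E (closedNbhd G h'.choose) v') :=
          congrArg Prod.snd hvv'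
        have hm := hgc.2 v hu.2
        have hm' := hgc'.2 v' hu'.2
        have hx := (hepC _ _ hm).1
        have hx' := (hepC _ _ hm').1
        have hCC' : closedNbhd G h.choose = closedNbhd G h'.choose := by
          apply hdisj _ _ hu.1 hu'.1 _ hx
          rw [h2]
          exact hx'
        have hgEq : gE E (closedNbhd G h.choose) = gE E (closedNbhd G h'.choose) := by
          rw [hCC']
        have hv'C : v' ∈ closedNbhd G h.choose := by
          rw [hCC']
          exact hu'.2
        exact hgc.1 hu.2 hv'C (by rw [h1, ← hgEq])
      · exfalso
        rw [dif_pos h, dif_neg h'] at hvv'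
        have hu := h.choose_spec
        have hm := (hgE _ hu.1).2 v hu.2
        have hx := (hepC _ _ hm).1
        have h2 : epC (closedNbhd G h.choose) (gE E (closedNbhd G h.choose) v) = v' :=
          congrArg Prod.snd hvv'
        exact h' ⟨h.choose, hu.1, h2 ▸ hx⟩
    · by_cases h' : ∃ u, (∀ e ∈ E, u ∉ e) ∧ v' ∈ closedNbhd G u
      · exfalso
        rw [dif_neg h, dif_pos h'] at hvv'
        have hu' := h'.choose_spec
        have hm := (hgE _ hu'.1).2 v' hu'.2
        have hx := (hepC _ _ hm).1
        have h2 : v = epC (closedNbhd G h'.choose) (gE E (closedNbhd G h'.choose) v') :=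
          congrArg Prod.snd hvv'
        exact h ⟨h'.choose, hu'.1, h2 ▸ hx⟩
      · rw [dif_neg h, dif_neg h'] at hvv'
        exact congrArg Prod.snd hvv'
  set ψ : V → ↥E × Bool := fun v =>
    (⟨(Afun G E v).1, (hAspec v).1⟩, decide ((Afun G E v).2 = ep2 (Afun G E v).1)) with hψ
  have hψinj : Function.Injective ψ := by
    intro a b hab
    apply hAinj
    have h1 : (Afun G E a).1 = (Afun G E b).1 := congrArg (fun p => (Prod.fst p).val) hab
    have h2 : decide ((Afun G E a).2 = ep2 (Afun G E a).1)
        = decide ((Afun G E b).2 = ep2 (Afun G E b).1) := congrArg Prod.snd hab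
    rw [h1] at h2
    have hx : (Afun G E a).2 ∈ (Afun G E b).1 := h1 ▸ (hAspec a).2
    have hy : (Afun G E b).2 ∈ (Afun G E b).1 := (hAspec b).2
    have h2' : ((Afun G E a).2 = ep2 (Afun G E b).1) ↔
        ((Afun G E b).2 = ep2 (Afun G E b).1) := decide_eq_decide.mp h2
    have hep2m : ep2 (Afun G E b).1 ∈ (Afun G E b).1 := by
      unfold ep2
      exact Classical.epsilon_spec ⟨(Afun G E b).2, hy⟩
    have hsnd : (Afun G E a).2 = (Afun G E b).2 := by
      by_cases hxe : (Afun G E a).2 = ep2 (Afun G E b).1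
      · rw [hxe, ← h2'.mp hxe]
      · have hye : ¬ ((Afun G E b).2 = ep2 (Afun G E b).1) := fun hh => hxe (h2'.mpr hh)
        obtain ⟨w, hw⟩ := Sym2.mem_iff_exists.mp hx
        rw [hw] at hx hy hep2m hxe hye
        rcases Sym2.mem_iff.mp hep2m with he | he
        · exact absurd he.symm hxe
        · rcases Sym2.mem_iff.mp hy with h' | h'
          · exact h'.symm
          · exact absurd (h'.trans he.symm) hye
    exact Prod.ext h1 hsnd
  have hcV : Fintype.card V = Nat.card V := Nat.card_eq_fintype_card.symm
  have hle : Nat.card V ≤ Nat.card (↥E × Bool) := Nat.card_le_card_of_injective ψ hψinj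
  have hEcard : Nat.card (↥E × Bool) = E.ncard * 2 := by
    rw [Nat.card_prod, Nat.card_coe_set_eq]
    simp [Nat.card_eq_fintype_card]
  omega
end

section
/- Let G be a simple graph, E₋ ⊆ E(G) a minimal strong triadic closure solution (i.e., every induced P₃ of G − E₋ has its two vertices at distance two adjacent in G), and let v be a simplicial vertex. Let X be the set of vertices x with N[x] = N[v], and let Y ⊆ N[v] be the set of endpoints in N[v] of edges between N[v] and V(G)∖N[v] not in E₋. Then every edge of G between X and Y belongs to E₋. -/
open scoped Classical

theorem stmt4 {V : Type*} (G : SimpleGraph V) (E : Set (Sym2 V)) (v : V)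
    (hsol : IsSTCSolution G E)
    (hmin : ∀ E' : Set (Sym2 V), IsSTCSolution G E' → E' ⊆ E → E' = E)
    (hsimp : G.IsClique (closedNbhd G v))
    (X Y : Set V)
    (hX : X = {x | closedNbhd G x = closedNbhd G v})
    (hY : Y = {y ∈ closedNbhd G v | ∃ z ∉ closedNbhd G v, G.Adj y z ∧ s(y, z) ∉ E}) :
    ∀ x ∈ X, ∀ y ∈ Y, G.Adj x y → s(x, y) ∈ E := by
  intro x hx y hy hxy
  by_contra hne
  subst hX hY
  obtain ⟨hyN, z, hzN, hyz, hyzE⟩ := hy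
  have hxN : closedNbhd G x = closedNbhd G v := hx
  have hxz : ¬ G.Adj x z := by
    intro h
    exact hzN (hxN ▸ (Set.mem_insert_iff.mpr (Or.inr h)) : z ∈ closedNbhd G v)
  have hxzne : x ≠ z := by
    rintro rfl; exact hzN (hxN ▸ Set.mem_insert _ _)
  have h1 : (G.deleteEdges E).Adj x y := by
    rw [SimpleGraph.deleteEdges_adj]; exact ⟨hxy, hne⟩
  have h2 : (G.deleteEdges E).Adj y z := by
    rw [SimpleGraph.deleteEdges_adj]; exact ⟨hyz, hyzE⟩
  have h3 : ¬ (G.deleteEdges E).Adj x z := fun h => hxz h.1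
  exact hxz (hsol.2 h1 h2 hxzne h3)
end

section
/- Let G be a simple graph and v a simplicial vertex of G with d(N[v]) ≤ d(v), where d(U) counts edges between U and its complement. Then the minimum size of a strong triadic closure solution of G equals the minimum size of a strong triadic closure solution of G − N[v] plus d(N[v]). -/
open scoped Classical

lemma mul_add_one_le {a b : ℕ} (ha : 1 ≤ a) (hb : 1 ≤ b) : a + b ≤ a * b + 1 := by
  obtain ⟨a', rfl⟩ := Nat.exists_eq_add_of_le ha
  obtain ⟨b', rfl⟩ := Nat.exists_eq_add_of_le hb
  nlinarith

lemma split_card {V:Type*} [Fintype V] [DecidableEq V] (u : V) (U C : Finset V) (hu : u ∉ U)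
    (P : V → V → Prop) [∀ a b, Decidable (P a b)] :
    (((insert u U) ×ˢ C).filter (fun p => P p.1 p.2)).card
      = (C.filter (fun w => P u w)).card + ((U ×ˢ C).filter (fun p => P p.1 p.2)).card := by
  have h1 : (insert u U) ×ˢ C = ({u} ∪ U) ×ˢ C := by
    rw [Finset.insert_eq]
  rw [h1, Finset.union_product, Finset.filter_union, Finset.card_union_of_disjoint,
    Finset.singleton_product, Finset.filter_map, Finset.card_map]
  · congr 1
  · simp only [Finset.disjoint_left, Finset.mem_filter, Finset.singleton_product, Finset.mem_map]
    rintro p ⟨⟨w, hw, rfl⟩, -⟩ ⟨hp2, -⟩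
    exact hu (Finset.mem_product.1 hp2).1

lemma core_count {V : Type*} [Fintype V] [DecidableEq V] (G : SimpleGraph V) [DecidableRel G.Adj]
    (C : Finset V) (v : V) (hv : v ∈ C)
    (hvC : ∀ u, u ∉ C → ¬ G.Adj u v)
    (St : V → V → Prop) [∀ a b, Decidable (St a b)]
    (F : Finset (Sym2 V))
    (hF : ∀ u w w', u ∉ C → w ∈ C → w' ∈ C → G.Adj u w → St u w → ¬ G.Adj u w' →
      s(w, w') ∈ F)
    (U : Finset V) (hU : ∀ x ∈ U, x ∉ C)
    (hne : ((U ×ˢ C).filter (fun p => G.Adj p.1 p.2 ∧ St p.1 p.2)).Nonempty) :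
    ((U ×ˢ C).filter (fun p => G.Adj p.1 p.2 ∧ St p.1 p.2)).card + C.card ≤
      F.card + ((U ×ˢ C).filter (fun p => G.Adj p.1 p.2)).card + 1 := by
  induction U using Finset.induction_on with
  | empty => simp at hne
  | @insert u U hu ih =>
    have huC : u ∉ C := hU u (Finset.mem_insert_self u U)
    have hU' : ∀ x ∈ U, x ∉ C := fun x hx => hU x (Finset.mem_insert_of_mem hx)
    rw [split_card u U C hu (fun a b => G.Adj a b ∧ St a b),
        split_card u U C hu (fun a b => G.Adj a b)]
    have hSuCu : (C.filter (fun w => G.Adj u w ∧ St u w)).card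
        ≤ (C.filter (fun w => G.Adj u w)).card := by
      apply Finset.card_le_card
      intro x hx
      simp only [Finset.mem_filter] at hx ⊢
      exact ⟨hx.1, hx.2.1⟩
    by_cases hUne : ((U ×ˢ C).filter (fun p => G.Adj p.1 p.2 ∧ St p.1 p.2)).Nonempty
    · have := ih hU' hUne
      omega
    · have hUzero : ((U ×ˢ C).filter (fun p => G.Adj p.1 p.2 ∧ St p.1 p.2)).card = 0 := by
        rw [Finset.card_eq_zero]
        exact Finset.not_nonempty_iff_eq_empty.1 hUne
      have hSupos : 0 < (C.filter (fun w => G.Adj u w ∧ St u w)).card := by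
        have h1 := Finset.card_pos.2 hne
        rw [split_card u U C hu (fun a b => G.Adj a b ∧ St a b), hUzero] at h1
        omega
      have hBupos : 0 < (C.filter (fun w => ¬ G.Adj u w)).card := by
        rw [Finset.card_pos]
        exact ⟨v, Finset.mem_filter.2 ⟨hv, hvC u huC⟩⟩
      have hcard : (C.filter (fun w => G.Adj u w)).card
          + (C.filter (fun w => ¬ G.Adj u w)).card = C.card :=
        Finset.card_filter_add_card_filter_not _
      have hNsub : ((C.filter (fun w => G.Adj u w ∧ St u w))
          ×ˢ (C.filter (fun w => ¬ G.Adj u w))).image (fun p => s(p.1, p.2)) ⊆ F := by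
        intro e he
        simp only [Finset.mem_image, Finset.mem_product, Finset.mem_filter] at he
        obtain ⟨⟨w, w'⟩, ⟨⟨hwC, hwa, hws⟩, hw'C, hw'a⟩, rfl⟩ := he
        exact hF u w w' huC hwC hw'C hwa hws hw'a
      have hNcard : (((C.filter (fun w => G.Adj u w ∧ St u w))
          ×ˢ (C.filter (fun w => ¬ G.Adj u w))).image (fun p => s(p.1, p.2))).card
          = (C.filter (fun w => G.Adj u w ∧ St u w)).card
            * (C.filter (fun w => ¬ G.Adj u w)).card := by
        rw [Finset.card_image_of_injOn, Finset.card_product]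
        rintro ⟨w, w'⟩ hp ⟨x, x'⟩ hq h
        simp only [Finset.mem_coe, Finset.mem_product, Finset.mem_filter] at hp hq
        rw [Sym2.eq_iff] at h
        rcases h with ⟨rfl, rfl⟩ | ⟨rfl, rfl⟩
        · rfl
        · exact absurd hp.1.2.1 hq.2.2
      have hFge : (C.filter (fun w => G.Adj u w ∧ St u w)).card
          * (C.filter (fun w => ¬ G.Adj u w)).card ≤ F.card :=
        hNcard ▸ Finset.card_le_card hNsub
      have harith := mul_add_one_le hSupos hBupos
      omega


-- trivial solution
lemma stc_edgeSet_solution {V : Type*} (G : SimpleGraph V) : IsSTCSolution G G.edgeSet := by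
  refine ⟨subset_rfl, ?_⟩
  intro u w x h1 _ _ _
  rw [SimpleGraph.deleteEdges_adj] at h1
  exact absurd ((G.mem_edgeSet).2 h1.1) h1.2

lemma stc_set_nonempty {V : Type*} (G : SimpleGraph V) :
    {n | ∃ E : Set (Sym2 V), IsSTCSolution G E ∧ E.ncard = n}.Nonempty :=
  ⟨_, G.edgeSet, stc_edgeSet_solution G, rfl⟩

lemma stc_exists_optimal {V : Type*} (G : SimpleGraph V) :
    ∃ E : Set (Sym2 V), IsSTCSolution G E ∧ E.ncard = stcNum G :=
  Nat.sInf_mem (stc_set_nonempty G)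

lemma stcNum_le {V : Type*} (G : SimpleGraph V) {E : Set (Sym2 V)} (hE : IsSTCSolution G E) :
    stcNum G ≤ E.ncard :=
  Nat.sInf_le ⟨E, hE, rfl⟩

-- cut of a singleton = degree
lemma cut_singleton {V : Type*} [Fintype V] (G : SimpleGraph V) (v : V) :
    cut G {v} = (G.neighborSet v).ncard := by
  have hset : {e ∈ G.edgeSet | ∃ a ∈ ({v} : Set V), ∃ b ∉ ({v} : Set V), e = s(a, b)}
      = (fun b => s(v, b)) '' (G.neighborSet v) := by
    ext e
    simp only [Set.mem_setOf_eq, Set.mem_image, Set.mem_singleton_iff, SimpleGraph.mem_neighborSet]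
    constructor
    · rintro ⟨he, a, rfl, b, hb, rfl⟩
      exact ⟨b, (G.mem_edgeSet).1 he, rfl⟩
    · rintro ⟨b, hb, rfl⟩
      exact ⟨(G.mem_edgeSet).2 hb, v, rfl, b, fun h => G.irrefl (h ▸ hb), rfl⟩
  rw [cut, hset, Set.ncard_image_of_injective]
  intro a b h
  rw [Sym2.eq_iff] at h
  rcases h with ⟨-, h⟩ | ⟨h1, h2⟩
  · exact h
  · rw [← h1, h2]

lemma cut_pairs_ncard {V : Type*} [Fintype V] (G : SimpleGraph V) (Cs : Set V)
    (Q : Sym2 V → Prop) :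
    {e ∈ G.edgeSet | (∃ a ∈ Cs, ∃ b ∉ Cs, e = s(a, b)) ∧ Q e}.ncard
      = ((Csᶜ.toFinset ×ˢ Cs.toFinset).filter
          (fun p => G.Adj p.1 p.2 ∧ Q s(p.1, p.2))).card := by
  rw [Set.ncard_eq_toFinset_card']
  refine (Finset.card_bij (fun p _ => s(p.1, p.2)) ?_ ?_ ?_).symm
  · intro p hp
    simp only [Finset.mem_filter, Finset.mem_product, Set.mem_toFinset, Set.mem_compl_iff] at hp
    simp only [Set.mem_toFinset, Set.mem_setOf_eq]
    exact ⟨(G.mem_edgeSet).2 hp.2.1, ⟨p.2, hp.1.2, p.1, hp.1.1, Sym2.eq_swap⟩, hp.2.2⟩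
  · intro p hp q hq h
    simp only [Finset.mem_filter, Finset.mem_product, Set.mem_toFinset, Set.mem_compl_iff] at hp hq
    rw [Sym2.eq_iff] at h
    rcases h with ⟨h1, h2⟩ | ⟨h1, h2⟩
    · exact Prod.ext h1 h2
    · exact absurd (h1 ▸ hq.1.2) hp.1.1
  · intro e he
    simp only [Set.mem_toFinset, Set.mem_setOf_eq] at he
    obtain ⟨he1, ⟨a, ha, b, hb, rfl⟩, hQ⟩ := he
    refine ⟨(b, a), ?_, Sym2.eq_swap⟩
    simp only [Finset.mem_filter, Finset.mem_product, Set.mem_toFinset, Set.mem_compl_iff]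
    exact ⟨⟨hb, ha⟩, ((G.mem_edgeSet).1 he1).symm, by rwa [Sym2.eq_swap]⟩

lemma del_adj_induce {V : Type*} (G : SimpleGraph V) (Cs : Set V) (E : Set (Sym2 V))
    (a b : ↥Csᶜ) :
    ((G.induce Csᶜ).deleteEdges {e : Sym2 ↥Csᶜ | Sym2.map Subtype.val e ∈ E}).Adj a b
      ↔ (G.deleteEdges E).Adj ↑a ↑b := by
  rw [SimpleGraph.deleteEdges_adj, SimpleGraph.deleteEdges_adj]
  constructor
  · rintro ⟨h1, h2⟩
    refine ⟨h1, fun hc => h2 ?_⟩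
    simp only [Set.mem_setOf_eq, Sym2.map_pair_eq]
    exact hc
  · rintro ⟨h1, h2⟩
    refine ⟨h1, fun hc => h2 ?_⟩
    simp only [Set.mem_setOf_eq, Sym2.map_pair_eq] at hc
    exact hc

lemma restrict_sol {V : Type*} (G : SimpleGraph V) (Cs : Set V) {E : Set (Sym2 V)}
    (hE : IsSTCSolution G E) :
    IsSTCSolution (G.induce Csᶜ) {e : Sym2 ↥Csᶜ | Sym2.map Subtype.val e ∈ E} := by
  constructor
  · intro e he
    induction e using Sym2.ind with
    | _ a b =>
      simp only [Set.mem_setOf_eq, Sym2.map_pair_eq] at he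
      have := hE.1 he
      rw [SimpleGraph.mem_edgeSet] at this ⊢
      exact this
  · intro u w x h1 h2 hne h3
    rw [del_adj_induce] at h1 h2 h3
    exact hE.2 h1 h2 (Subtype.coe_injective.ne hne) h3

lemma image_restrict {V : Type*} (Cs : Set V) (E : Set (Sym2 V)) :
    Sym2.map (Subtype.val : ↥Csᶜ → V) '' {e : Sym2 ↥Csᶜ | Sym2.map Subtype.val e ∈ E}
      = {e ∈ E | ∀ x ∈ e, x ∉ Cs} := by
  ext e
  constructor
  · rintro ⟨e', he', rfl⟩
    refine ⟨he', ?_⟩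
    induction e' using Sym2.ind with
    | _ a b =>
      intro x hx
      rw [Sym2.map_pair_eq, Sym2.mem_iff] at hx
      rcases hx with rfl | rfl
      · exact a.2
      · exact b.2
  · intro he
    induction e using Sym2.ind with
    | _ a b =>
      obtain ⟨heE, hout⟩ := he
      refine ⟨s(⟨a, hout a (Sym2.mem_mk_left a b)⟩, ⟨b, hout b (Sym2.mem_mk_right a b)⟩), ?_, ?_⟩
      · simp only [Set.mem_setOf_eq, Sym2.map_pair_eq]
        exact heE
      · rw [Sym2.map_pair_eq]

lemma extend_sol {V : Type*} (G : SimpleGraph V) (v : V)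
    (hsimp : G.IsClique (closedNbhd G v))
    {E' : Set (Sym2 ↥(closedNbhd G v)ᶜ)}
    (hE' : IsSTCSolution (G.induce (closedNbhd G v)ᶜ) E') :
    IsSTCSolution G (Sym2.map Subtype.val '' E'
      ∪ {e ∈ G.edgeSet | ∃ a ∈ closedNbhd G v, ∃ b ∉ closedNbhd G v, e = s(a, b)}) := by
  have hcutmem : ∀ a b : V, G.Adj a b → a ∈ closedNbhd G v → b ∉ closedNbhd G v →
      s(a, b) ∈ Sym2.map (Subtype.val : ↥(closedNbhd G v)ᶜ → V) '' E'
        ∪ {e ∈ G.edgeSet | ∃ a ∈ closedNbhd G v, ∃ b ∉ closedNbhd G v, e = s(a, b)} := by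
    intro a b hab ha hb
    exact Or.inr ⟨(G.mem_edgeSet).2 hab, a, ha, b, hb, rfl⟩
  constructor
  · rintro e (⟨e', he', rfl⟩ | he)
    · induction e' using Sym2.ind with
      | _ a b =>
        have := hE'.1 he'
        rw [SimpleGraph.mem_edgeSet] at this
        rw [Sym2.map_pair_eq, SimpleGraph.mem_edgeSet]
        exact this
    · exact he.1
  · intro u w x h1 h2 hne h3
    rw [SimpleGraph.deleteEdges_adj] at h1 h2
    by_cases hw : w ∈ closedNbhd G v
    · have hu : u ∈ closedNbhd G v := by
        by_contra hu
        exact h1.2 (Sym2.eq_swap ▸ hcutmem w u h1.1.symm hw hu)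
      have hx : x ∈ closedNbhd G v := by
        by_contra hx
        exact h2.2 (hcutmem w x h2.1 hw hx)
      exact hsimp hu hx hne
    · have hu : u ∉ closedNbhd G v := by
        intro hu
        exact h1.2 (hcutmem u w h1.1 hu hw)
      have hx : x ∉ closedNbhd G v := by
        intro hx
        exact h2.2 (Sym2.eq_swap ▸ hcutmem x w h2.1.symm hx hw)
      by_contra hGux
      have hd1 : ((G.induce (closedNbhd G v)ᶜ).deleteEdges E').Adj ⟨u, hu⟩ ⟨w, hw⟩ := by
        rw [SimpleGraph.deleteEdges_adj]
        exact ⟨h1.1, fun hc => h1.2 (Or.inl ⟨_, hc, rfl⟩)⟩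
      have hd2 : ((G.induce (closedNbhd G v)ᶜ).deleteEdges E').Adj ⟨w, hw⟩ ⟨x, hx⟩ := by
        rw [SimpleGraph.deleteEdges_adj]
        exact ⟨h2.1, fun hc => h2.2 (Or.inl ⟨_, hc, rfl⟩)⟩
      have hd3 : ¬ ((G.induce (closedNbhd G v)ᶜ).deleteEdges E').Adj ⟨u, hu⟩ ⟨x, hx⟩ := by
        intro hc
        rw [SimpleGraph.deleteEdges_adj] at hc
        exact hGux hc.1
      exact hGux (hE'.2 hd1 hd2 (fun hh => hne (congrArg Subtype.val hh)) hd3)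

lemma touch_ge_cut {V : Type*} [Fintype V] (G : SimpleGraph V) (v : V)
    (hsimp : G.IsClique (closedNbhd G v))
    (hd : cut G (closedNbhd G v) ≤ cut G {v})
    {E : Set (Sym2 V)} (hE : IsSTCSolution G E) :
    cut G (closedNbhd G v) ≤ {e ∈ E | ∃ x ∈ e, x ∈ closedNbhd G v}.ncard := by
  classical
  set Cs : Set V := closedNbhd G v with hCsdef
  have hvCs : v ∈ Cs := Set.mem_insert _ _
  have hout_nadj : ∀ u, u ∉ Cs → ¬ G.Adj u v := by
    intro u hu ha
    exact hu (Set.mem_insert_of_mem _ (ha.symm : u ∈ G.neighborSet v))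
  set Ein : Set (Sym2 V) := {e ∈ E | ∀ x ∈ e, x ∈ Cs} with hEin
  set Ecut : Set (Sym2 V) := {e ∈ E | ∃ a ∈ Cs, ∃ b ∉ Cs, e = s(a, b)} with hEcut
  set σset : Set (Sym2 V) := {e ∈ G.edgeSet | (∃ a ∈ Cs, ∃ b ∉ Cs, e = s(a, b)) ∧ e ∉ E}
    with hσdef
  have hsplit2 : {e ∈ E | ∃ x ∈ e, x ∈ Cs} = Ein ∪ Ecut := by
    ext e
    induction e using Sym2.ind with
    | _ a b =>
      simp only [Set.mem_setOf_eq, Set.mem_union, hEin, hEcut]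
      constructor
      · rintro ⟨heE, hx⟩
        by_cases ha : a ∈ Cs
        · by_cases hb : b ∈ Cs
          · refine Or.inl ⟨heE, ?_⟩
            intro x hxe
            rw [Sym2.mem_iff] at hxe
            rcases hxe with rfl | rfl
            · exact ha
            · exact hb
          · exact Or.inr ⟨heE, a, ha, b, hb, rfl⟩
        · by_cases hb : b ∈ Cs
          · exact Or.inr ⟨heE, b, hb, a, ha, Sym2.eq_swap⟩
          · obtain ⟨x, hxe, hxc⟩ := hx
            rw [Sym2.mem_iff] at hxe
            rcases hxe with rfl | rfl
            · exact absurd hxc ha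
            · exact absurd hxc hb
      · rintro (⟨heE, hall⟩ | ⟨heE, a', ha', b', hb', heq⟩)
        · exact ⟨heE, a, Sym2.mem_mk_left a b, hall a (Sym2.mem_mk_left a b)⟩
        · exact ⟨heE, a', heq ▸ Sym2.mem_mk_left a' b', ha'⟩
  have hdisj2 : Disjoint Ein Ecut := by
    rw [Set.disjoint_left]
    rintro e ⟨-, hall⟩ ⟨-, a, ha, b, hb, rfl⟩
    exact hb (hall b (Sym2.mem_mk_right a b))
  have hsplit3 : ({e ∈ G.edgeSet | ∃ a ∈ Cs, ∃ b ∉ Cs, e = s(a, b)} : Set (Sym2 V))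
      = Ecut ∪ σset := by
    ext e
    simp only [Set.mem_setOf_eq, Set.mem_union, hEcut, hσdef]
    constructor
    · rintro ⟨he, hshape⟩
      by_cases heE : e ∈ E
      · exact Or.inl ⟨heE, hshape⟩
      · exact Or.inr ⟨he, hshape, heE⟩
    · rintro (⟨heE, hshape⟩ | ⟨he, hshape, -⟩)
      · exact ⟨hE.1 heE, hshape⟩
      · exact ⟨he, hshape⟩
  have hdisj3 : Disjoint Ecut σset := by
    rw [Set.disjoint_left]
    rintro e ⟨heE, -⟩ ⟨-, -, heE'⟩
    exact heE' heE
  have hnm : v ∉ G.neighborSet v := fun h => G.irrefl h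
  have hCscard : Cs.toFinset.card = (G.neighborSet v).ncard + 1 := by
    rw [← Set.ncard_eq_toFinset_card']
    show (closedNbhd G v).ncard = _
    rw [closedNbhd, Set.ncard_insert_of_notMem hnm (Set.toFinite _)]
  have hdle : cut G Cs ≤ (G.neighborSet v).ncard := by
    calc cut G Cs ≤ cut G {v} := hd
      _ = (G.neighborSet v).ncard := cut_singleton G v
  have hDcard : cut G Cs = ((Csᶜ.toFinset ×ˢ Cs.toFinset).filter
      (fun p => G.Adj p.1 p.2)).card := by
    have h2 := cut_pairs_ncard G Cs (fun _ => True)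
    have h3 : {e ∈ G.edgeSet | (∃ a ∈ Cs, ∃ b ∉ Cs, e = s(a, b)) ∧ True}
        = {e ∈ G.edgeSet | ∃ a ∈ Cs, ∃ b ∉ Cs, e = s(a, b)} := by
      simp
    rw [cut, ← h3, h2]
    congr 1
    ext p
    simp only [Finset.mem_filter, and_true]
  have hσcard := cut_pairs_ncard G Cs (fun e => e ∉ E)
  -- key inequality via core_count
  have hkey : σset.ncard ≤ Ein.ncard := by
    by_cases hσne : σset.Nonempty
    · have hF : ∀ u w w', u ∉ Cs.toFinset → w ∈ Cs.toFinset → w' ∈ Cs.toFinset →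
          G.Adj u w → s(u, w) ∉ E → ¬ G.Adj u w' → s(w, w') ∈ Ein.toFinset := by
        intro u w w' hu hw hw' hadj hst hnadj
        rw [Set.mem_toFinset] at hu hw hw'
        have hww' : w ≠ w' := by
          rintro rfl
          exact hnadj hadj
        have hadjww' : G.Adj w w' := hsimp hw hw' hww'
        have hmem : s(w, w') ∈ E := by
          by_contra hc
          have d1 : (G.deleteEdges E).Adj u w := by
            rw [SimpleGraph.deleteEdges_adj]; exact ⟨hadj, hst⟩
          have d2 : (G.deleteEdges E).Adj w w' := by
            rw [SimpleGraph.deleteEdges_adj]; exact ⟨hadjww', hc⟩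
          have d3 : ¬ (G.deleteEdges E).Adj u w' := by
            intro hcc
            rw [SimpleGraph.deleteEdges_adj] at hcc
            exact hnadj hcc.1
          have hune : u ≠ w' := by
            rintro rfl
            exact hu hw'
          exact hnadj (hE.2 d1 d2 hune d3)
        rw [Set.mem_toFinset]
        refine ⟨hmem, ?_⟩
        intro x hx
        rw [Sym2.mem_iff] at hx
        rcases hx with rfl | rfl
        · exact hw
        · exact hw'
      have hne : ((Csᶜ.toFinset ×ˢ Cs.toFinset).filter
          (fun p => G.Adj p.1 p.2 ∧ s(p.1, p.2) ∉ E)).Nonempty := by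
        obtain ⟨e, he⟩ := hσne
        rw [hσdef] at he
        obtain ⟨hedge, ⟨a, ha, b, hb, rfl⟩, hnE⟩ := he
        refine ⟨(b, a), Finset.mem_filter.2 ⟨Finset.mem_product.2 ⟨?_, ?_⟩, ?_, ?_⟩⟩
        · rw [Set.mem_toFinset]; exact hb
        · rw [Set.mem_toFinset]; exact ha
        · exact ((G.mem_edgeSet).1 hedge).symm
        · rwa [Sym2.eq_swap]
      have hcore := core_count G Cs.toFinset v (Set.mem_toFinset.2 hvCs)
        (fun u hu => hout_nadj u (by rwa [Set.mem_toFinset] at hu))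
        (fun a b => s(a, b) ∉ E) Ein.toFinset hF Csᶜ.toFinset
        (fun x hx => by rw [Set.mem_toFinset] at hx ⊢; exact hx) hne
      have hcore' : σset.ncard + Cs.toFinset.card
          ≤ Ein.toFinset.card + cut G Cs + 1 := by
        rw [hσcard, hDcard]
        convert hcore using 2
        congr 1
        ext p
        simp only [Finset.mem_filter]
      have hEinc : Ein.ncard = Ein.toFinset.card := Set.ncard_eq_toFinset_card' _
      omega
    · rw [Set.not_nonempty_iff_eq_empty] at hσne
      rw [hσne, Set.ncard_empty]
      exact Nat.zero_le _
  calc cut G Cs = Ecut.ncard + σset.ncard := by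
        rw [cut, hsplit3]
        exact Set.ncard_union_eq hdisj3 (Set.toFinite _) (Set.toFinite _)
    _ ≤ Ecut.ncard + Ein.ncard := by omega
    _ = {e ∈ E | ∃ x ∈ e, x ∈ Cs}.ncard := by
        rw [hsplit2, Set.ncard_union_eq hdisj2 (Set.toFinite _) (Set.toFinite _)]
        omega

theorem stmt5 {V : Type*} [Fintype V] (G : SimpleGraph V) (v : V)
    (hsimp : G.IsClique (closedNbhd G v))
    (hd : cut G (closedNbhd G v) ≤ cut G {v}) :
    stcNum G = stcNum (G.induce (closedNbhd G v)ᶜ) + cut G (closedNbhd G v) := by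
  classical
  have hinj : Function.Injective (Sym2.map (Subtype.val : ↥(closedNbhd G v)ᶜ → V)) :=
    Sym2.map.injective Subtype.val_injective
  apply le_antisymm
  · obtain ⟨E', hE', hcard'⟩ := stc_exists_optimal (G.induce (closedNbhd G v)ᶜ)
    have hsol := extend_sol G v hsimp hE'
    have hle := stcNum_le G hsol
    have hdisj : Disjoint (Sym2.map (Subtype.val : ↥(closedNbhd G v)ᶜ → V) '' E')
        {e ∈ G.edgeSet | ∃ a ∈ closedNbhd G v, ∃ b ∉ closedNbhd G v, e = s(a, b)} := by
      rw [Set.disjoint_left]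
      rintro e ⟨e', -, rfl⟩ ⟨-, a, ha, b, hb, heq⟩
      have hmem : a ∈ Sym2.map (Subtype.val : ↥(closedNbhd G v)ᶜ → V) e' :=
        heq ▸ Sym2.mem_mk_left a b
      rw [Sym2.mem_map] at hmem
      obtain ⟨x, -, rfl⟩ := hmem
      exact x.2 ha
    have hunion : (Sym2.map (Subtype.val : ↥(closedNbhd G v)ᶜ → V) '' E'
        ∪ {e ∈ G.edgeSet | ∃ a ∈ closedNbhd G v, ∃ b ∉ closedNbhd G v, e = s(a, b)}).ncard
        = E'.ncard + cut G (closedNbhd G v) := by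
      rw [Set.ncard_union_eq hdisj (Set.toFinite _) (Set.toFinite _),
        Set.ncard_image_of_injective _ hinj, cut]
    rw [hunion] at hle
    omega
  · obtain ⟨E, hE, hcard⟩ := stc_exists_optimal G
    have h1 : stcNum (G.induce (closedNbhd G v)ᶜ)
        ≤ {e ∈ E | ∀ x ∈ e, x ∉ closedNbhd G v}.ncard := by
      have hsol := restrict_sol G (closedNbhd G v) hE
      have hle := stcNum_le _ hsol
      have heq : {e : Sym2 ↥(closedNbhd G v)ᶜ | Sym2.map Subtype.val e ∈ E}.ncard
          = {e ∈ E | ∀ x ∈ e, x ∉ closedNbhd G v}.ncard := by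
        rw [← image_restrict (closedNbhd G v) E, Set.ncard_image_of_injective _ hinj]
      rwa [heq] at hle
    have h2 : cut G (closedNbhd G v) ≤ {e ∈ E | ∃ x ∈ e, x ∈ closedNbhd G v}.ncard :=
      touch_ge_cut G v hsimp hd hE
    have hdisj : Disjoint {e ∈ E | ∀ x ∈ e, x ∉ closedNbhd G v}
        {e ∈ E | ∃ x ∈ e, x ∈ closedNbhd G v} := by
      rw [Set.disjoint_left]
      rintro e ⟨-, hall⟩ ⟨-, x, hx, hxc⟩
      exact hall x hx hxc
    have hsplit : E = {e ∈ E | ∀ x ∈ e, x ∉ closedNbhd G v}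
        ∪ {e ∈ E | ∃ x ∈ e, x ∈ closedNbhd G v} := by
      ext e
      simp only [Set.mem_union, Set.mem_setOf_eq]
      constructor
      · intro he
        by_cases h : ∃ x ∈ e, x ∈ closedNbhd G v
        · exact Or.inr ⟨he, h⟩
        · push_neg at h
          exact Or.inl ⟨he, h⟩
      · rintro (⟨he, -⟩ | ⟨he, -⟩) <;> exact he
    have h3 : E.ncard = {e ∈ E | ∀ x ∈ e, x ∉ closedNbhd G v}.ncard
        + {e ∈ E | ∃ x ∈ e, x ∈ closedNbhd G v}.ncard := by
      rw [← Set.ncard_union_eq hdisj (Set.toFinite _) (Set.toFinite _), ← hsplit]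
    omega
end

section
/- A finite simple graph H is trivially perfect (i.e., has no induced P₄ and no induced C₄) if and only if every nonempty connected induced subgraph of H contains a universal vertex (a vertex adjacent to all other vertices of that subgraph). -/
open scoped Classical

open SimpleGraph in
private lemma tpUniversalKey {W : Type*} [Fintype W] (G : SimpleGraph W)
    (hp4 : ¬∃ a b c d : W, a ≠ b ∧ a ≠ c ∧ a ≠ d ∧ b ≠ c ∧ b ≠ d ∧ c ≠ d ∧
      G.Adj a b ∧ G.Adj b c ∧ G.Adj c d ∧ ¬G.Adj a c ∧ ¬G.Adj b d ∧ ¬G.Adj a d)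
    (hc4 : ¬∃ a b c d : W, a ≠ b ∧ a ≠ c ∧ a ≠ d ∧ b ≠ c ∧ b ≠ d ∧ c ≠ d ∧
      G.Adj a b ∧ G.Adj b c ∧ G.Adj c d ∧ G.Adj d a ∧ ¬G.Adj a c ∧ ¬G.Adj b d)
    (hc : G.Connected) :
    ∃ u : W, ∀ w : W, w ≠ u → G.Adj u w := by
  classical
  have hne : Nonempty W := hc.nonempty
  obtain ⟨u, -, hu⟩ := Finset.exists_max_image Finset.univ (fun v => G.degree v)
    ⟨hne.some, Finset.mem_univ _⟩
  refine ⟨u, ?_⟩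
  by_contra hcon
  push_neg at hcon
  obtain ⟨w0, hw0ne, hw0⟩ := hcon
  set S : Set W := insert u (G.neighborSet u) with hS
  have hw0S : w0 ∉ S := by
    simp only [hS, Set.mem_insert_iff, mem_neighborSet]
    push_neg
    exact ⟨hw0ne, hw0⟩
  obtain ⟨p⟩ := hc.preconnected u w0
  obtain ⟨d, -, hd1, hd2⟩ := p.exists_boundary_dart S (Set.mem_insert _ _) hw0S
  set x := d.toProd.1 with hxdef
  set w := d.toProd.2 with hwdef
  have hxw : G.Adj x w := d.adj
  have huw : ¬G.Adj u w := by
    intro h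
    exact hd2 (Set.mem_insert_of_mem _ h)
  have hwu : w ≠ u := by
    intro h; exact hd2 (h ▸ Set.mem_insert _ _)
  have hxu : x ≠ u := by
    intro h; exact huw (h ▸ hxw)
  have hux : G.Adj u x := by
    rcases hd1 with h | h
    · exact absurd h hxu
    · exact h
  by_cases hy : ∃ y, G.Adj u y ∧ ¬G.Adj x y ∧ y ≠ x
  · obtain ⟨y, h1, h2, h3⟩ := hy
    have hyw : y ≠ w := fun h => huw (h ▸ h1)
    have hyu : y ≠ u := fun h => G.irrefl (h ▸ h1)
    by_cases hAdjyw : G.Adj y w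
    · exact hc4 ⟨y, u, x, w, hyu, h3, hyw, Ne.symm hxu, hwu.symm, fun h => G.irrefl (h ▸ hxw),
        h1.symm, hux, hxw, hAdjyw.symm, fun h => h2 h.symm, huw⟩
    · exact hp4 ⟨y, u, x, w, hyu, h3, hyw, Ne.symm hxu, hwu.symm, fun h => G.irrefl (h ▸ hxw),
        h1.symm, hux, hxw, fun h => h2 h.symm, huw, hAdjyw⟩
  · push_neg at hy
    have hsub : G.neighborFinset u ⊆ insert x (((G.neighborFinset x).erase u).erase w) := by
      intro y hyN
      have hAdjuy : G.Adj u y := by rwa [mem_neighborFinset] at hyN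
      by_cases hxy : G.Adj x y
      · have hyu : y ≠ u := fun h => G.irrefl (h ▸ hAdjuy)
        have hyw : y ≠ w := fun h => huw (h ▸ hAdjuy)
        exact Finset.mem_insert_of_mem (Finset.mem_erase.mpr ⟨hyw,
          Finset.mem_erase.mpr ⟨hyu, (mem_neighborFinset _ _ _).mpr hxy⟩⟩)
      · rw [hy y hAdjuy hxy]; exact Finset.mem_insert_self x _
    have huNx : u ∈ G.neighborFinset x := (mem_neighborFinset _ _ _).mpr hux.symm
    have hwNx : w ∈ G.neighborFinset x := (mem_neighborFinset _ _ _).mpr hxw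
    have hwNx' : w ∈ (G.neighborFinset x).erase u := Finset.mem_erase.mpr ⟨hwu, hwNx⟩
    have hcard1 : (((G.neighborFinset x).erase u).erase w).card
        = (G.neighborFinset x).card - 2 := by
      rw [Finset.card_erase_of_mem hwNx', Finset.card_erase_of_mem huNx]; omega
    have h2le : 2 ≤ (G.neighborFinset x).card := by
      have : ({u, w} : Finset W) ⊆ G.neighborFinset x := by
        intro z hz
        rcases Finset.mem_insert.mp hz with h | h
        · exact h ▸ huNx
        · exact (Finset.mem_singleton.mp h) ▸ hwNx
      calc 2 = ({u, w} : Finset W).card := by rw [Finset.card_insert_of_notMem (by simp [hwu.symm]), Finset.card_singleton]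
        _ ≤ _ := Finset.card_le_card this
    have hle := Finset.card_le_card hsub
    have hins := Finset.card_insert_le x (((G.neighborFinset x).erase u).erase w)
    have hdegle : G.degree x ≤ G.degree u := hu x (Finset.mem_univ _)
    have e1 : (G.neighborFinset u).card = G.degree u := G.card_neighborFinset_eq_degree u
    have e2 : (G.neighborFinset x).card = G.degree x := G.card_neighborFinset_eq_degree x
    omega

theorem stmt6 {V : Type*} [Fintype V] (H : SimpleGraph V) :
    IsTriviallyPerfect H ↔
      ∀ s : Set V, s.Nonempty → (H.induce s).Connected →
        ∃ u : s, ∀ w : s, w ≠ u → (H.induce s).Adj u w := by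
  constructor
  · rintro ⟨hp4, hc4⟩ s hs hcon
    refine tpUniversalKey (H.induce s) ?_ ?_ hcon
    · rintro ⟨a, b, c, d, n1, n2, n3, n4, n5, n6, e1, e2, e3, m1, m2, m3⟩
      exact hp4 ⟨a, b, c, d, Subtype.coe_injective.ne n1, Subtype.coe_injective.ne n2,
        Subtype.coe_injective.ne n3, Subtype.coe_injective.ne n4, Subtype.coe_injective.ne n5,
        Subtype.coe_injective.ne n6, e1, e2, e3, m1, m2, m3⟩
    · rintro ⟨a, b, c, d, n1, n2, n3, n4, n5, n6, e1, e2, e3, e4, m1, m2⟩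
      exact hc4 ⟨a, b, c, d, Subtype.coe_injective.ne n1, Subtype.coe_injective.ne n2,
        Subtype.coe_injective.ne n3, Subtype.coe_injective.ne n4, Subtype.coe_injective.ne n5,
        Subtype.coe_injective.ne n6, e1, e2, e3, e4, m1, m2⟩
  · intro hUniv
    constructor
    · rintro ⟨a, b, c, d, n1, n2, n3, n4, n5, n6, e1, e2, e3, m1, m2, m3⟩
      set s : Set V := {a, b, c, d} with hsdef
      have ha : a ∈ s := by simp [hsdef]
      have hb : b ∈ s := by simp [hsdef]
      have hc : c ∈ s := by simp [hsdef]
      have hd : d ∈ s := by simp [hsdef]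
      have hreach : ∀ z : s, (H.induce s).Reachable z ⟨b, hb⟩ := by
        rintro ⟨z, hz⟩
        simp only [hsdef, Set.mem_insert_iff, Set.mem_singleton_iff] at hz
        rcases hz with h | h | h | h
        · subst h; exact SimpleGraph.Adj.reachable (show H.Adj z b from e1)
        · subst h; exact SimpleGraph.Reachable.refl _
        · subst h; exact SimpleGraph.Adj.reachable (show H.Adj z b from e2.symm)
        · subst h
          exact (SimpleGraph.Adj.reachable
              (show (H.induce s).Adj ⟨z, hz⟩ ⟨c, hc⟩ from e3.symm)).trans
            (SimpleGraph.Adj.reachable (show (H.induce s).Adj ⟨c, hc⟩ ⟨b, hb⟩ from e2.symm))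
      have hcon : (H.induce s).Connected := by
        haveI : Nonempty s := ⟨⟨a, ha⟩⟩
        exact SimpleGraph.Connected.mk fun x y => (hreach x).trans (hreach y).symm
      obtain ⟨u, hu⟩ := hUniv s ⟨a, ha⟩ hcon
      have hus := u.2
      simp only [hsdef, Set.mem_insert_iff, Set.mem_singleton_iff] at hus
      rcases hus with h | h | h | h
      · have := hu ⟨c, hc⟩ (fun hh => n2 (h ▸ (congrArg Subtype.val hh).symm))
        exact m1 (show H.Adj a c from h ▸ this)
      · have := hu ⟨d, hd⟩ (fun hh => n5 (h ▸ (congrArg Subtype.val hh).symm))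
        exact m2 (show H.Adj b d from h ▸ this)
      · have := hu ⟨a, ha⟩ (fun hh => n2 (h ▸ (congrArg Subtype.val hh)))
        exact m1 (show H.Adj c a from h ▸ this).symm
      · have := hu ⟨a, ha⟩ (fun hh => n3 (h ▸ (congrArg Subtype.val hh)))
        exact m3 (show H.Adj d a from h ▸ this).symm
    · rintro ⟨a, b, c, d, n1, n2, n3, n4, n5, n6, e1, e2, e3, e4, m1, m2⟩
      set s : Set V := {a, b, c, d} with hsdef
      have ha : a ∈ s := by simp [hsdef]
      have hb : b ∈ s := by simp [hsdef]
      have hc : c ∈ s := by simp [hsdef]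
      have hd : d ∈ s := by simp [hsdef]
      have hreach : ∀ z : s, (H.induce s).Reachable z ⟨b, hb⟩ := by
        rintro ⟨z, hz⟩
        simp only [hsdef, Set.mem_insert_iff, Set.mem_singleton_iff] at hz
        rcases hz with h | h | h | h
        · subst h; exact SimpleGraph.Adj.reachable (show H.Adj z b from e1)
        · subst h; exact SimpleGraph.Reachable.refl _
        · subst h; exact SimpleGraph.Adj.reachable (show H.Adj z b from e2.symm)
        · subst h
          exact (SimpleGraph.Adj.reachable
              (show (H.induce s).Adj ⟨z, hz⟩ ⟨c, hc⟩ from e3.symm)).trans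
            (SimpleGraph.Adj.reachable (show (H.induce s).Adj ⟨c, hc⟩ ⟨b, hb⟩ from e2.symm))
      have hcon : (H.induce s).Connected := by
        haveI : Nonempty s := ⟨⟨a, ha⟩⟩
        exact SimpleGraph.Connected.mk fun x y => (hreach x).trans (hreach y).symm
      obtain ⟨u, hu⟩ := hUniv s ⟨a, ha⟩ hcon
      have hus := u.2
      simp only [hsdef, Set.mem_insert_iff, Set.mem_singleton_iff] at hus
      rcases hus with h | h | h | h
      · have := hu ⟨c, hc⟩ (fun hh => n2 (h ▸ (congrArg Subtype.val hh).symm))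
        exact m1 (show H.Adj a c from h ▸ this)
      · have := hu ⟨d, hd⟩ (fun hh => n5 (h ▸ (congrArg Subtype.val hh).symm))
        exact m2 (show H.Adj b d from h ▸ this)
      · have := hu ⟨a, ha⟩ (fun hh => n2 (h ▸ (congrArg Subtype.val hh)))
        exact m1 (show H.Adj c a from h ▸ this).symm
      · have := hu ⟨b, hb⟩ (fun hh => n5 (h ▸ (congrArg Subtype.val hh)))
        exact m2 (show H.Adj d b from h ▸ this).symm
end

section
/- Let G be a simple graph, let Ĝ be a minimal trivially perfect completion of G (a trivially perfect supergraph on the same vertex set, minimal with respect to edge-set inclusion among such supergraphs), and let u, v be vertices with N_G[u] ⊆ N_G[v]. Then N_Ĝ[u] ⊆ N_Ĝ[v]. -/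
open scoped Classical

section MimicAux

variable {V : Type*}

lemma mem_closedNbhd {G : SimpleGraph V} {x y : V} :
    y ∈ closedNbhd G x ↔ y = x ∨ G.Adj x y := by
  simp [closedNbhd]

/-- The graph obtained from `H` by deleting all edges from `u` to vertices outside `N_H[v]`. -/
def mimic (H : SimpleGraph V) (u v : V) : SimpleGraph V where
  Adj x y := H.Adj x y ∧ (x = u → (y = v ∨ H.Adj v y)) ∧ (y = u → (x = v ∨ H.Adj v x))
  symm := ⟨fun x y ⟨h1, h2, h3⟩ => ⟨h1.symm, h3, h2⟩⟩
  loopless := ⟨fun x h => H.loopless.irrefl x h.1⟩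

lemma mimic_le (H : SimpleGraph V) (u v : V) : mimic H u v ≤ H := fun _ _ h => h.1

lemma mimic_adj_ne {H : SimpleGraph V} {u v x y : V} (hx : x ≠ u) (hy : y ≠ u) :
    (mimic H u v).Adj x y ↔ H.Adj x y := by
  constructor
  · exact fun h => h.1
  · exact fun h => ⟨h, fun h' => absurd h' hx, fun h' => absurd h' hy⟩

lemma mimic_adj_u {H : SimpleGraph V} {u v y : V} :
    (mimic H u v).Adj u y ↔ H.Adj u y ∧ (y = v ∨ H.Adj v y) := by
  constructor
  · exact fun h => ⟨h.1, h.2.1 rfl⟩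
  · rintro ⟨h1, h2⟩
    exact ⟨h1, fun _ => h2, fun hy => absurd h1 (by simp [hy])⟩

lemma P4At_rev {H : SimpleGraph V} {a b c d : V} (h : P4At H a b c d) : P4At H d c b a := by
  obtain ⟨d1, d2, d3, d4, d5, d6, e1, e2, e3, n1, n2, n3⟩ := h
  exact ⟨d6.symm, d5.symm, d3.symm, d4.symm, d2.symm, d1.symm, e3.symm, e2.symm, e1.symm,
    fun h => n2 h.symm, fun h => n1 h.symm, fun h => n3 h.symm⟩

lemma C4At_rot {H : SimpleGraph V} {a b c d : V} (h : C4At H a b c d) : C4At H b c d a := by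
  obtain ⟨d1, d2, d3, d4, d5, d6, e1, e2, e3, e4, n1, n2⟩ := h
  exact ⟨d4, d5, d1.symm, d6, d2.symm, d3.symm, e2, e3, e4, e1,
    n2, fun h => n1 h.symm⟩

lemma noP4a {H : SimpleGraph V} (hTP : IsTriviallyPerfect H) {u v b c d : V}
    (h : P4At (mimic H u v) u b c d) : False := by
  obtain ⟨d1, d2, d3, d4, d5, d6, e1, e2, e3, n1, n2, n3⟩ := h
  have Eub : H.Adj u b := e1.1
  have hb : b = v ∨ H.Adj v b := e1.2.1 rfl
  have Ebc : H.Adj b c := e2.1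
  have Ecd : H.Adj c d := e3.1
  have Nbd : ¬H.Adj b d := fun h' => n2 ((mimic_adj_ne d1.symm d3.symm).2 h')
  by_cases huc' : H.Adj u c
  · have hrem : ¬(c = v ∨ H.Adj v c) := fun hc => n1 (mimic_adj_u.2 ⟨huc', hc⟩)
    push_neg at hrem
    obtain ⟨hcv, hvc⟩ := hrem
    have hvb : H.Adj v b := by
      rcases hb with rfl | h'
      · exact absurd Ebc hvc
      · exact h'
    have hvd : v ≠ d := by
      rintro rfl
      exact hvc Ecd.symm
    by_cases hvd' : H.Adj v d
    · exact hTP.2 ⟨v, b, c, d, hvb.ne, Ne.symm hcv, hvd, d4, d5, d6,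
        hvb, Ebc, Ecd, hvd'.symm, hvc, Nbd⟩
    · exact hTP.1 ⟨v, b, c, d, hvb.ne, Ne.symm hcv, hvd, d4, d5, d6,
        hvb, Ebc, Ecd, hvc, Nbd, hvd'⟩
  · by_cases hud' : H.Adj u d
    · exact hTP.2 ⟨u, b, c, d, d1, d2, d3, d4, d5, d6, Eub, Ebc, Ecd, hud'.symm, huc', Nbd⟩
    · exact hTP.1 ⟨u, b, c, d, d1, d2, d3, d4, d5, d6, Eub, Ebc, Ecd, huc', Nbd, hud'⟩

lemma noP4b {H : SimpleGraph V} (hTP : IsTriviallyPerfect H) {u v a c d : V}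
    (h : P4At (mimic H u v) a u c d) : False := by
  obtain ⟨d1, d2, d3, d4, d5, d6, e1, e2, e3, n1, n2, n3⟩ := h
  have Eau : H.Adj a u := e1.1
  have ha : a = v ∨ H.Adj v a := e1.2.2 rfl
  have Euc : H.Adj u c := e2.1
  have hc : c = v ∨ H.Adj v c := e2.2.1 rfl
  have Ecd : H.Adj c d := e3.1
  have Nac : ¬H.Adj a c := fun h' => n1 ((mimic_adj_ne d1 (Ne.symm d4)).2 h')
  have Nad : ¬H.Adj a d := fun h' => n3 ((mimic_adj_ne d1 (Ne.symm d5)).2 h')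
  by_cases hud' : H.Adj u d
  · have hrem : ¬(d = v ∨ H.Adj v d) := fun hd => n2 (mimic_adj_u.2 ⟨hud', hd⟩)
    push_neg at hrem
    obtain ⟨hdv, hvd⟩ := hrem
    have hvc : H.Adj v c := by
      rcases hc with rfl | h'
      · exact absurd Ecd hvd
      · exact h'
    have hva : H.Adj v a := by
      rcases ha with rfl | h'
      · exact absurd hvc Nac
      · exact h'
    exact hTP.1 ⟨a, v, c, d, hva.ne', d2, d3, hvc.ne, Ne.symm hdv, d6,
      hva.symm, hvc, Ecd, Nac, hvd, Nad⟩
  · exact hTP.1 ⟨a, u, c, d, d1, d2, d3, d4, d5, d6, Eau, Euc, Ecd, Nac, hud', Nad⟩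

lemma noC4a {H : SimpleGraph V} (hTP : IsTriviallyPerfect H) {u v b c d : V}
    (h : C4At (mimic H u v) u b c d) : False := by
  obtain ⟨d1, d2, d3, d4, d5, d6, e1, e2, e3, e4, n1, n2⟩ := h
  have Eub : H.Adj u b := e1.1
  have hb : b = v ∨ H.Adj v b := e1.2.1 rfl
  have Ebc : H.Adj b c := e2.1
  have Ecd : H.Adj c d := e3.1
  have Edu : H.Adj d u := e4.1
  have hd : d = v ∨ H.Adj v d := e4.2.2 rfl
  have Nbd : ¬H.Adj b d := fun h' => n2 ((mimic_adj_ne d1.symm d3.symm).2 h')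
  by_cases huc' : H.Adj u c
  · have hrem : ¬(c = v ∨ H.Adj v c) := fun hc => n1 (mimic_adj_u.2 ⟨huc', hc⟩)
    push_neg at hrem
    obtain ⟨hcv, hvc⟩ := hrem
    have hvb : H.Adj v b := by
      rcases hb with rfl | h'
      · exact absurd Ebc hvc
      · exact h'
    have hvd : H.Adj v d := by
      rcases hd with rfl | h'
      · exact absurd Ecd.symm hvc
      · exact h'
    exact hTP.2 ⟨v, b, c, d, hvb.ne, Ne.symm hcv, hvd.ne, d4, d5, d6,
      hvb, Ebc, Ecd, hvd.symm, hvc, Nbd⟩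
  · exact hTP.2 ⟨u, b, c, d, d1, d2, d3, d4, d5, d6, Eub, Ebc, Ecd, Edu, huc', Nbd⟩

lemma mimic_TP {H : SimpleGraph V} (hTP : IsTriviallyPerfect H) (u v : V) :
    IsTriviallyPerfect (mimic H u v) := by
  constructor
  · rintro ⟨a, b, c, d, h⟩
    by_cases ha : a = u
    · subst ha; exact noP4a hTP h
    by_cases hb : b = u
    · subst hb; exact noP4b hTP h
    by_cases hc : c = u
    · subst hc; exact noP4b hTP (P4At_rev h)
    by_cases hd : d = u
    · subst hd; exact noP4a hTP (P4At_rev h)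
    obtain ⟨d1, d2, d3, d4, d5, d6, e1, e2, e3, n1, n2, n3⟩ := h
    exact hTP.1 ⟨a, b, c, d, d1, d2, d3, d4, d5, d6, e1.1, e2.1, e3.1,
      fun h' => n1 ((mimic_adj_ne ha hc).2 h'),
      fun h' => n2 ((mimic_adj_ne hb hd).2 h'),
      fun h' => n3 ((mimic_adj_ne ha hd).2 h')⟩
  · rintro ⟨a, b, c, d, h⟩
    by_cases ha : a = u
    · subst ha; exact noC4a hTP h
    by_cases hb : b = u
    · subst hb; exact noC4a hTP (C4At_rot h)
    by_cases hc : c = u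
    · subst hc; exact noC4a hTP (C4At_rot (C4At_rot h))
    by_cases hd : d = u
    · subst hd; exact noC4a hTP (C4At_rot (C4At_rot (C4At_rot h)))
    obtain ⟨d1, d2, d3, d4, d5, d6, e1, e2, e3, e4, n1, n2⟩ := h
    exact hTP.2 ⟨a, b, c, d, d1, d2, d3, d4, d5, d6, e1.1, e2.1, e3.1, e4.1,
      fun h' => n1 ((mimic_adj_ne ha hc).2 h'),
      fun h' => n2 ((mimic_adj_ne hb hd).2 h')⟩

end MimicAux

theorem stmt8 {V : Type*} (G Gh : SimpleGraph V)
    (hmin : IsMinimalTPCompletion G Gh) (u v : V)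
    (huv : closedNbhd G u ⊆ closedNbhd G v) :
    closedNbhd Gh u ⊆ closedNbhd Gh v := by
  by_cases huv' : u = v
  · subst huv'; exact subset_rfl
  have hle1 : G ≤ mimic Gh u v := by
    intro x y hxy
    refine ⟨hmin.1.1 hxy, ?_, ?_⟩
    · rintro rfl
      have hy := huv (mem_closedNbhd.2 (Or.inr hxy))
      rcases mem_closedNbhd.1 hy with rfl | h
      · exact Or.inl rfl
      · exact Or.inr (hmin.1.1 h)
    · rintro rfl
      have hy := huv (mem_closedNbhd.2 (Or.inr hxy.symm))
      rcases mem_closedNbhd.1 hy with rfl | h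
      · exact Or.inl rfl
      · exact Or.inr (hmin.1.1 h)
  have heq : mimic Gh u v = Gh :=
    hmin.2 _ hle1 (mimic_le Gh u v) (mimic_TP hmin.1.2 u v)
  intro x hx
  rcases mem_closedNbhd.1 hx with rfl | h
  · have hy := huv (mem_closedNbhd.2 (Or.inl rfl))
    rcases mem_closedNbhd.1 hy with rfl | h
    · exact mem_closedNbhd.2 (Or.inl rfl)
    · exact mem_closedNbhd.2 (Or.inr (hmin.1.1 h))
  · have h' : (mimic Gh u v).Adj u x := by rw [heq]; exact h
    exact mem_closedNbhd.2 (mimic_adj_u.1 h').2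
end

section
/- Let H be a connected simple graph, let Ĥ be a minimum trivially perfect completion of H, and let u be a universal vertex of Ĥ. Then Ĥ − u is a minimum trivially perfect completion of H − u. -/
open scoped Classical

def extUniv {V : Type*} (u : V) (G' : SimpleGraph {w : V | w ≠ u}) : SimpleGraph V where
  Adj x y := x ≠ y ∧ (x = u ∨ y = u ∨ ∃ (hx : x ≠ u) (hy : y ≠ u), G'.Adj ⟨x, hx⟩ ⟨y, hy⟩)
  symm := by
    constructor
    rintro x y ⟨hne, h⟩
    refine ⟨hne.symm, ?_⟩
    rcases h with h | h | ⟨hx, hy, h⟩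
    · tauto
    · tauto
    · exact Or.inr (Or.inr ⟨hy, hx, h.symm⟩)
  loopless := ⟨fun x h => h.1 rfl⟩

lemma extUniv_induce {V : Type*} (u : V) (G' : SimpleGraph {w : V | w ≠ u}) :
    (extUniv u G').induce {w : V | w ≠ u} = G' := by
  ext ⟨x, hx⟩ ⟨y, hy⟩
  show (extUniv u G').Adj x y ↔ _
  constructor
  · rintro ⟨hne, h | h | ⟨hx', hy', h⟩⟩
    · exact absurd h hx
    · exact absurd h hy
    · exact h
  · intro h
    exact ⟨fun e => G'.ne_of_adj h (Subtype.ext e), Or.inr (Or.inr ⟨hx, hy, h⟩)⟩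

lemma extUniv_adj_ne {V : Type*} (u : V) (G' : SimpleGraph {w : V | w ≠ u}) {x y : V}
    (hx : x ≠ u) (hy : y ≠ u) :
    (extUniv u G').Adj x y ↔ G'.Adj ⟨x, hx⟩ ⟨y, hy⟩ := by
  conv_rhs => rw [← extUniv_induce u G']
  exact Iff.rfl

lemma card_diff_split {V : Type*} [Fintype V] (H K : SimpleGraph V) (u : V) :
    (K.edgeSet \ H.edgeSet).ncard =
      {e | e ∈ K.edgeSet \ H.edgeSet ∧ u ∈ e}.ncard +
      ((K.induce {w : V | w ≠ u}).edgeSet \ (H.induce {w : V | w ≠ u}).edgeSet).ncard := by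
  have himg : Sym2.map (Subtype.val : {w : V | w ≠ u} → V) ''
      ((K.induce {w : V | w ≠ u}).edgeSet \ (H.induce {w : V | w ≠ u}).edgeSet) =
      {e | e ∈ K.edgeSet \ H.edgeSet ∧ u ∉ e} := by
    ext e
    constructor
    · rintro ⟨e', he', rfl⟩
      induction e' using Sym2.ind with
      | _ a b =>
        obtain ⟨hK, hH⟩ := he'
        rw [Sym2.map_pair_eq]
        refine ⟨⟨?_, ?_⟩, ?_⟩
        · exact hK
        · exact hH
        · rw [Sym2.mem_iff]
          push_neg
          exact ⟨fun h => a.2 h.symm, fun h => b.2 h.symm⟩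
    · intro he
      induction e using Sym2.ind with
      | _ a b =>
        obtain ⟨⟨hK, hH⟩, hu⟩ := he
        rw [Sym2.mem_iff] at hu
        push_neg at hu
        have ha : a ≠ u := fun h => hu.1 h.symm
        have hb : b ≠ u := fun h => hu.2 h.symm
        refine ⟨s(⟨a, ha⟩, ⟨b, hb⟩), ⟨?_, ?_⟩, by rw [Sym2.map_pair_eq]⟩
        · exact hK
        · exact hH
  have hsplit : K.edgeSet \ H.edgeSet =
      {e | e ∈ K.edgeSet \ H.edgeSet ∧ u ∈ e} ∪ {e | e ∈ K.edgeSet \ H.edgeSet ∧ u ∉ e} := by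
    ext e; by_cases h : u ∈ e <;> simp_all [Set.mem_diff]
  have hdis : Disjoint {e | e ∈ K.edgeSet \ H.edgeSet ∧ u ∈ e}
      {e | e ∈ K.edgeSet \ H.edgeSet ∧ u ∉ e} := by
    rw [Set.disjoint_left]
    rintro e ⟨-, h1⟩ ⟨-, h2⟩
    exact h2 h1
  calc (K.edgeSet \ H.edgeSet).ncard
      = ({e | e ∈ K.edgeSet \ H.edgeSet ∧ u ∈ e} ∪
          {e | e ∈ K.edgeSet \ H.edgeSet ∧ u ∉ e}).ncard := by rw [← hsplit]
    _ = {e | e ∈ K.edgeSet \ H.edgeSet ∧ u ∈ e}.ncard +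
          {e | e ∈ K.edgeSet \ H.edgeSet ∧ u ∉ e}.ncard :=
        Set.ncard_union_eq hdis (Set.toFinite _) (Set.toFinite _)
    _ = _ := by
        rw [← himg, Set.ncard_image_of_injective _ (Sym2.map.injective Subtype.val_injective)]

lemma tp_induce {V : Type*} {G : SimpleGraph V} (s : Set V)
    (h : IsTriviallyPerfect G) : IsTriviallyPerfect (G.induce s) := by
  constructor
  · rintro ⟨a, b, c, d, h1, h2, h3, h4, h5, h6, e1, e2, e3, n1, n2, n3⟩
    exact h.1 ⟨a, b, c, d, Subtype.coe_ne_coe.2 h1, Subtype.coe_ne_coe.2 h2,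
      Subtype.coe_ne_coe.2 h3, Subtype.coe_ne_coe.2 h4, Subtype.coe_ne_coe.2 h5,
      Subtype.coe_ne_coe.2 h6, e1, e2, e3, n1, n2, n3⟩
  · rintro ⟨a, b, c, d, h1, h2, h3, h4, h5, h6, e1, e2, e3, e4, n1, n2⟩
    exact h.2 ⟨a, b, c, d, Subtype.coe_ne_coe.2 h1, Subtype.coe_ne_coe.2 h2,
      Subtype.coe_ne_coe.2 h3, Subtype.coe_ne_coe.2 h4, Subtype.coe_ne_coe.2 h5,
      Subtype.coe_ne_coe.2 h6, e1, e2, e3, e4, n1, n2⟩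

lemma extUniv_le {V : Type*} {u : V} {H : SimpleGraph V} {G' : SimpleGraph {w : V | w ≠ u}}
    (hle : H.induce {w : V | w ≠ u} ≤ G') : H ≤ extUniv u G' := by
  intro x y h
  refine ⟨h.ne, ?_⟩
  by_cases hx : x = u
  · exact Or.inl hx
  by_cases hy : y = u
  · exact Or.inr (Or.inl hy)
  · exact Or.inr (Or.inr ⟨hx, hy, hle (by exact h : (H.induce {w : V | w ≠ u}).Adj ⟨x, hx⟩ ⟨y, hy⟩)⟩)

lemma extUniv_tp {V : Type*} (u : V) {G' : SimpleGraph {w : V | w ≠ u}}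
    (h : IsTriviallyPerfect G') : IsTriviallyPerfect (extUniv u G') := by
  constructor
  · rintro ⟨a, b, c, d, h1, h2, h3, h4, h5, h6, e1, e2, e3, n1, n2, n3⟩
    have ha : a ≠ u := fun e => n1 ⟨h2, Or.inl e⟩
    have hc : c ≠ u := fun e => n1 ⟨h2, Or.inr (Or.inl e)⟩
    have hb : b ≠ u := fun e => n2 ⟨h5, Or.inl e⟩
    have hd : d ≠ u := fun e => n2 ⟨h5, Or.inr (Or.inl e)⟩
    exact h.1 ⟨⟨a, ha⟩, ⟨b, hb⟩, ⟨c, hc⟩, ⟨d, hd⟩,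
      fun e => h1 (congrArg Subtype.val e), fun e => h2 (congrArg Subtype.val e),
      fun e => h3 (congrArg Subtype.val e), fun e => h4 (congrArg Subtype.val e),
      fun e => h5 (congrArg Subtype.val e), fun e => h6 (congrArg Subtype.val e),
      (extUniv_adj_ne u G' ha hb).1 e1, (extUniv_adj_ne u G' hb hc).1 e2,
      (extUniv_adj_ne u G' hc hd).1 e3,
      fun x => n1 ((extUniv_adj_ne u G' ha hc).2 x),
      fun x => n2 ((extUniv_adj_ne u G' hb hd).2 x),
      fun x => n3 ((extUniv_adj_ne u G' ha hd).2 x)⟩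
  · rintro ⟨a, b, c, d, h1, h2, h3, h4, h5, h6, e1, e2, e3, e4, n1, n2⟩
    have ha : a ≠ u := fun e => n1 ⟨h2, Or.inl e⟩
    have hc : c ≠ u := fun e => n1 ⟨h2, Or.inr (Or.inl e)⟩
    have hb : b ≠ u := fun e => n2 ⟨h5, Or.inl e⟩
    have hd : d ≠ u := fun e => n2 ⟨h5, Or.inr (Or.inl e)⟩
    exact h.2 ⟨⟨a, ha⟩, ⟨b, hb⟩, ⟨c, hc⟩, ⟨d, hd⟩,
      fun e => h1 (congrArg Subtype.val e), fun e => h2 (congrArg Subtype.val e),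
      fun e => h3 (congrArg Subtype.val e), fun e => h4 (congrArg Subtype.val e),
      fun e => h5 (congrArg Subtype.val e), fun e => h6 (congrArg Subtype.val e),
      (extUniv_adj_ne u G' ha hb).1 e1, (extUniv_adj_ne u G' hb hc).1 e2,
      (extUniv_adj_ne u G' hc hd).1 e3, (extUniv_adj_ne u G' hd ha).1 e4,
      fun x => n1 ((extUniv_adj_ne u G' ha hc).2 x),
      fun x => n2 ((extUniv_adj_ne u G' hb hd).2 x)⟩

theorem stmt11 {V : Type*} [Fintype V] (H Hh : SimpleGraph V)
    (hconn : H.Connected)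
    (hmin : IsMinTPCompletion H Hh) (u : V)
    (huniv : ∀ w : V, w ≠ u → Hh.Adj u w) :
    IsMinTPCompletion (H.induce {w : V | w ≠ u}) (Hh.induce {w : V | w ≠ u}) := by
  constructor
  · exact ⟨fun a b h => hmin.1.1 h, tp_induce _ hmin.1.2⟩
  · intro G' hG'
    have hle : H ≤ extUniv u G' := extUniv_le hG'.1
    have htp : IsTriviallyPerfect (extUniv u G') := extUniv_tp u hG'.2
    have hm := hmin.2 (extUniv u G') ⟨hle, htp⟩
    rw [card_diff_split H Hh u, card_diff_split H (extUniv u G') u] at hm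
    have hset : {e | e ∈ Hh.edgeSet \ H.edgeSet ∧ u ∈ e} =
        {e | e ∈ (extUniv u G').edgeSet \ H.edgeSet ∧ u ∈ e} := by
      ext e
      induction e using Sym2.ind with
      | _ a b =>
        simp only [Set.mem_setOf_eq, Set.mem_diff, SimpleGraph.mem_edgeSet, Sym2.mem_iff]
        constructor
        · rintro ⟨⟨hadj, hH⟩, hu⟩
          refine ⟨⟨?_, hH⟩, hu⟩
          rcases hu with rfl | rfl
          · exact ⟨hadj.ne, Or.inl rfl⟩
          · exact ⟨hadj.ne, Or.inr (Or.inl rfl)⟩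
        · rintro ⟨⟨hadj, hH⟩, hu⟩
          refine ⟨⟨?_, hH⟩, hu⟩
          rcases hu with rfl | rfl
          · exact huniv b (Ne.symm hadj.ne)
          · exact (huniv a hadj.ne).symm
    rw [hset, extUniv_induce u G'] at hm
    exact Nat.le_of_add_le_add_left hm
end

section
/- Every module M of a simple graph G remains a module in any minimal trivially perfect completion of G. -/
open scoped Classical

def modComp {W : Type*} (H : SimpleGraph W) (M : Set W) : SimpleGraph W where
  Adj u v := u ≠ v ∧ (((u ∈ M ↔ v ∈ M) ∧ H.Adj u v) ∨
    (u ∈ M ∧ v ∉ M ∧ ∀ a ∈ M, H.Adj a v) ∨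
    (v ∈ M ∧ u ∉ M ∧ ∀ a ∈ M, H.Adj a u))
  symm := by
    constructor
    rintro u v ⟨hne, h | h | h⟩
    · exact ⟨hne.symm, Or.inl ⟨h.1.symm, h.2.symm⟩⟩
    · exact ⟨hne.symm, Or.inr (Or.inr h)⟩
    · exact ⟨hne.symm, Or.inr (Or.inl h)⟩
  loopless := by constructor; rintro u ⟨hne, -⟩; exact hne rfl

lemma mc_adj_same {W : Type*} {H : SimpleGraph W} {M : Set W} {u v : W}
    (h : u ∈ M ↔ v ∈ M) : (modComp H M).Adj u v ↔ H.Adj u v := by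
  constructor
  · rintro ⟨hne, ⟨-, h'⟩ | ⟨h1, h2, -⟩ | ⟨h1, h2, -⟩⟩
    · exact h'
    · exact absurd (h.mp h1) h2
    · exact absurd (h.mpr h1) h2
  · intro h'
    exact ⟨h'.ne, Or.inl ⟨h, h'⟩⟩

lemma mc_adj_mix {W : Type*} {H : SimpleGraph W} {M : Set W} {u v : W}
    (hu : u ∈ M) (hv : v ∉ M) : (modComp H M).Adj u v ↔ ∀ a ∈ M, H.Adj a v := by
  constructor
  · rintro ⟨hne, ⟨hiff, -⟩ | ⟨-, -, h⟩ | ⟨h1, h2, -⟩⟩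
    · exact absurd (hiff.mp hu) hv
    · exact h
    · exact absurd hu h2
  · intro h
    exact ⟨fun e => hv (e ▸ hu), Or.inr (Or.inl ⟨hu, hv, h⟩)⟩

lemma p4_rev {W : Type*} {H : SimpleGraph W} {a b c d : W}
    (h : P4At H a b c d) : P4At H d c b a := by
  obtain ⟨nab, nac, nad, nbc, nbd, ncd, Aab, Abc, Acd, Nac, Nbd, Nad⟩ := h
  exact ⟨ncd.symm, nbd.symm, nad.symm, nbc.symm, nac.symm, nab.symm,
    Acd.symm, Abc.symm, Aab.symm, fun h => Nbd h.symm, fun h => Nac h.symm,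
    fun h => Nad h.symm⟩

lemma c4_rot {W : Type*} {H : SimpleGraph W} {a b c d : W}
    (h : C4At H a b c d) : C4At H b c d a := by
  obtain ⟨nab, nac, nad, nbc, nbd, ncd, Aab, Abc, Acd, Ada, Nac, Nbd⟩ := h
  exact ⟨nbc, nbd, nab.symm, ncd, nac.symm, nad.symm,
    Abc, Acd, Ada, Aab, Nbd, fun h => Nac h.symm⟩

lemma mc_p4_single {W : Type*} {H : SimpleGraph W} {M : Set W}
    (hP4 : ¬∃ a b c d, P4At H a b c d) (hC4 : ¬∃ a b c d, C4At H a b c d)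
    {a b c d : W} (ha : a ∈ M) (hb : b ∉ M) (hc : c ∉ M) (hd : d ∉ M)
    (hp : P4At (modComp H M) a b c d) : False := by
  obtain ⟨nab, nac, nad, nbc, nbd, ncd, Aab, Abc, Acd, Nac, Nbd, Nad⟩ := hp
  have hbfull := (mc_adj_mix ha hb).mp Aab
  have Hbc : H.Adj b c := (mc_adj_same (iff_of_false hb hc)).mp Abc
  have Hcd : H.Adj c d := (mc_adj_same (iff_of_false hc hd)).mp Acd
  have NHbd : ¬H.Adj b d := fun h => Nbd ((mc_adj_same (iff_of_false hb hd)).mpr h)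
  have hne : ¬ ∀ m ∈ M, H.Adj m c := fun h => Nac ((mc_adj_mix ha hc).mpr h)
  push_neg at hne
  obtain ⟨m, hm, hmc⟩ := hne
  have hmb : m ≠ b := fun e => hb (e ▸ hm)
  have hmc' : m ≠ c := fun e => hc (e ▸ hm)
  have hmd' : m ≠ d := fun e => hd (e ▸ hm)
  by_cases hmd : H.Adj m d
  · exact hC4 ⟨m, b, c, d, hmb, hmc', hmd', nbc, nbd, ncd,
      hbfull m hm, Hbc, Hcd, hmd.symm, hmc, NHbd⟩
  · exact hP4 ⟨m, b, c, d, hmb, hmc', hmd', nbc, nbd, ncd,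
      hbfull m hm, Hbc, Hcd, hmc, NHbd, hmd⟩

lemma mc_p4_internal {W : Type*} {H : SimpleGraph W} {M : Set W}
    (hP4 : ¬∃ a b c d, P4At H a b c d)
    {a b c d : W} (ha : a ∉ M) (hb : b ∈ M) (hc : c ∉ M) (hd : d ∉ M)
    (hp : P4At (modComp H M) a b c d) : False := by
  obtain ⟨nab, nac, nad, nbc, nbd, ncd, Aab, Abc, Acd, Nac, Nbd, Nad⟩ := hp
  have hafull := (mc_adj_mix hb ha).mp Aab.symm
  have hcfull := (mc_adj_mix hb hc).mp Abc
  have Hcd : H.Adj c d := (mc_adj_same (iff_of_false hc hd)).mp Acd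
  have NHac : ¬H.Adj a c := fun h => Nac ((mc_adj_same (iff_of_false ha hc)).mpr h)
  have NHad : ¬H.Adj a d := fun h => Nad ((mc_adj_same (iff_of_false ha hd)).mpr h)
  have hne : ¬ ∀ m ∈ M, H.Adj m d := fun h => Nbd ((mc_adj_mix hb hd).mpr h)
  push_neg at hne
  obtain ⟨m, hm, hmd⟩ := hne
  have hma : m ≠ a := fun e => ha (e ▸ hm)
  have hmc' : m ≠ c := fun e => hc (e ▸ hm)
  have hmd' : m ≠ d := fun e => hd (e ▸ hm)
  exact hP4 ⟨a, m, c, d, hma.symm, nac, nad, hmc', hmd', ncd,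
    (hafull m hm).symm, hcfull m hm, Hcd, NHac, hmd, NHad⟩

lemma mc_c4_single {W : Type*} {H : SimpleGraph W} {M : Set W}
    (hC4 : ¬∃ a b c d, C4At H a b c d)
    {a b c d : W} (ha : a ∈ M) (hb : b ∉ M) (hc : c ∉ M) (hd : d ∉ M)
    (hp : C4At (modComp H M) a b c d) : False := by
  obtain ⟨nab, nac, nad, nbc, nbd, ncd, Aab, Abc, Acd, Ada, Nac, Nbd⟩ := hp
  have hbfull := (mc_adj_mix ha hb).mp Aab
  have hdfull := (mc_adj_mix ha hd).mp Ada.symm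
  have Hbc : H.Adj b c := (mc_adj_same (iff_of_false hb hc)).mp Abc
  have Hcd : H.Adj c d := (mc_adj_same (iff_of_false hc hd)).mp Acd
  have NHbd : ¬H.Adj b d := fun h => Nbd ((mc_adj_same (iff_of_false hb hd)).mpr h)
  have hne : ¬ ∀ m ∈ M, H.Adj m c := fun h => Nac ((mc_adj_mix ha hc).mpr h)
  push_neg at hne
  obtain ⟨m, hm, hmc⟩ := hne
  have hmb : m ≠ b := fun e => hb (e ▸ hm)
  have hmc' : m ≠ c := fun e => hc (e ▸ hm)
  have hmd' : m ≠ d := fun e => hd (e ▸ hm)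
  exact hC4 ⟨m, b, c, d, hmb, hmc', hmd', nbc, nbd, ncd,
    hbfull m hm, Hbc, Hcd, (hdfull m hm).symm, hmc, NHbd⟩

lemma mc_c4_opp {W : Type*} {H : SimpleGraph W} {M : Set W}
    (hC4 : ¬∃ a b c d, C4At H a b c d)
    {a b c d : W} (ha : a ∈ M) (hb : b ∉ M) (hc : c ∈ M) (hd : d ∉ M)
    (hp : C4At (modComp H M) a b c d) : False := by
  obtain ⟨nab, nac, nad, nbc, nbd, ncd, Aab, Abc, Acd, Ada, Nac, Nbd⟩ := hp
  have hbfull := (mc_adj_mix ha hb).mp Aab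
  have hdfull := (mc_adj_mix hc hd).mp Acd
  have NHac : ¬H.Adj a c := fun h => Nac ((mc_adj_same (iff_of_true ha hc)).mpr h)
  have NHbd : ¬H.Adj b d := fun h => Nbd ((mc_adj_same (iff_of_false hb hd)).mpr h)
  exact hC4 ⟨a, b, c, d, nab, nac, nad, nbc, nbd, ncd,
    hbfull a ha, (hbfull c hc).symm, hdfull c hc, (hdfull a ha).symm, NHac, NHbd⟩

lemma mc_tp {W : Type*} {H : SimpleGraph W} {M : Set W}
    (hH : IsTriviallyPerfect H) : IsTriviallyPerfect (modComp H M) := by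
  obtain ⟨hP4, hC4⟩ := hH
  constructor
  · rintro ⟨a, b, c, d, hp⟩
    have hp' := hp
    obtain ⟨nab, nac, nad, nbc, nbd, ncd, Aab, Abc, Acd, Nac, Nbd, Nad⟩ := hp'
    by_cases ha : a ∈ M <;> by_cases hb : b ∈ M <;> by_cases hc : c ∈ M <;>
      by_cases hd : d ∈ M
    · exact hP4 ⟨a, b, c, d, nab, nac, nad, nbc, nbd, ncd,
        (mc_adj_same (iff_of_true ha hb)).mp Aab,
        (mc_adj_same (iff_of_true hb hc)).mp Abc,
        (mc_adj_same (iff_of_true hc hd)).mp Acd,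
        fun h => Nac ((mc_adj_same (iff_of_true ha hc)).mpr h),
        fun h => Nbd ((mc_adj_same (iff_of_true hb hd)).mpr h),
        fun h => Nad ((mc_adj_same (iff_of_true ha hd)).mpr h)⟩
    · exact Nad ((mc_adj_mix ha hd).mpr ((mc_adj_mix hc hd).mp Acd))
    · exact Nac ((mc_adj_mix ha hc).mpr ((mc_adj_mix hb hc).mp Abc))
    · exact Nac ((mc_adj_mix ha hc).mpr ((mc_adj_mix hb hc).mp Abc))
    · exact Nbd (((mc_adj_mix hd hb).mpr ((mc_adj_mix ha hb).mp Aab)).symm)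
    · exact Nad ((mc_adj_mix ha hd).mpr ((mc_adj_mix hc hd).mp Acd))
    · exact Nbd (((mc_adj_mix hd hb).mpr ((mc_adj_mix ha hb).mp Aab)).symm)
    · exact mc_p4_single hP4 hC4 ha hb hc hd hp
    · exact Nac (((mc_adj_mix hc ha).mpr ((mc_adj_mix hb ha).mp Aab.symm)).symm)
    · exact Nac (((mc_adj_mix hc ha).mpr ((mc_adj_mix hb ha).mp Aab.symm)).symm)
    · exact Nad (((mc_adj_mix hd ha).mpr ((mc_adj_mix hb ha).mp Aab.symm)).symm)
    · exact mc_p4_internal hP4 ha hb hc hd hp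
    · exact Nbd (((mc_adj_mix hd hb).mpr ((mc_adj_mix hc hb).mp Abc.symm)).symm)
    · exact mc_p4_internal hP4 hd hc hb ha (p4_rev hp)
    · exact mc_p4_single hP4 hC4 hd hc hb ha (p4_rev hp)
    · exact hP4 ⟨a, b, c, d, nab, nac, nad, nbc, nbd, ncd,
        (mc_adj_same (iff_of_false ha hb)).mp Aab,
        (mc_adj_same (iff_of_false hb hc)).mp Abc,
        (mc_adj_same (iff_of_false hc hd)).mp Acd,
        fun h => Nac ((mc_adj_same (iff_of_false ha hc)).mpr h),
        fun h => Nbd ((mc_adj_same (iff_of_false hb hd)).mpr h),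
        fun h => Nad ((mc_adj_same (iff_of_false ha hd)).mpr h)⟩
  · rintro ⟨a, b, c, d, hp⟩
    have hp' := hp
    obtain ⟨nab, nac, nad, nbc, nbd, ncd, Aab, Abc, Acd, Ada, Nac, Nbd⟩ := hp'
    by_cases ha : a ∈ M <;> by_cases hb : b ∈ M <;> by_cases hc : c ∈ M <;>
      by_cases hd : d ∈ M
    · exact hC4 ⟨a, b, c, d, nab, nac, nad, nbc, nbd, ncd,
        (mc_adj_same (iff_of_true ha hb)).mp Aab,
        (mc_adj_same (iff_of_true hb hc)).mp Abc,
        (mc_adj_same (iff_of_true hc hd)).mp Acd,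
        (mc_adj_same (iff_of_true hd ha)).mp Ada,
        fun h => Nac ((mc_adj_same (iff_of_true ha hc)).mpr h),
        fun h => Nbd ((mc_adj_same (iff_of_true hb hd)).mpr h)⟩
    · exact Nbd ((mc_adj_mix hb hd).mpr ((mc_adj_mix ha hd).mp Ada.symm))
    · exact Nac ((mc_adj_mix ha hc).mpr ((mc_adj_mix hb hc).mp Abc))
    · exact Nac ((mc_adj_mix ha hc).mpr ((mc_adj_mix hb hc).mp Abc))
    · exact Nbd (((mc_adj_mix hd hb).mpr ((mc_adj_mix ha hb).mp Aab)).symm)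
    · exact mc_c4_opp hC4 ha hb hc hd hp
    · exact Nac ((mc_adj_mix ha hc).mpr ((mc_adj_mix hd hc).mp Acd.symm))
    · exact mc_c4_single hC4 ha hb hc hd hp
    · exact Nac (((mc_adj_mix hc ha).mpr ((mc_adj_mix hb ha).mp Aab.symm)).symm)
    · exact Nbd ((mc_adj_mix hb hd).mpr ((mc_adj_mix hc hd).mp Acd))
    · exact mc_c4_opp hC4 hb hc hd ha (c4_rot hp)
    · exact mc_c4_single hC4 hb hc hd ha (c4_rot hp)
    · exact Nbd (((mc_adj_mix hd hb).mpr ((mc_adj_mix hc hb).mp Abc.symm)).symm)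
    · exact mc_c4_single hC4 hc hd ha hb (c4_rot (c4_rot hp))
    · exact mc_c4_single hC4 hd ha hb hc (c4_rot (c4_rot (c4_rot hp)))
    · exact hC4 ⟨a, b, c, d, nab, nac, nad, nbc, nbd, ncd,
        (mc_adj_same (iff_of_false ha hb)).mp Aab,
        (mc_adj_same (iff_of_false hb hc)).mp Abc,
        (mc_adj_same (iff_of_false hc hd)).mp Acd,
        (mc_adj_same (iff_of_false hd ha)).mp Ada,
        fun h => Nac ((mc_adj_same (iff_of_false ha hc)).mpr h),
        fun h => Nbd ((mc_adj_same (iff_of_false hb hd)).mpr h)⟩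

theorem stmt12 {V : Type*} (G Gh : SimpleGraph V) (M : Set V)
    (hM : IsModule G M) (hmin : IsMinimalTPCompletion G Gh) :
    IsModule Gh M := by
  obtain ⟨⟨hle, htp⟩, hmin2⟩ := hmin
  have hG2le : modComp Gh M ≤ Gh := by
    rintro u v ⟨hne, ⟨-, h⟩ | ⟨hu, hv, h⟩ | ⟨hv, hu, h⟩⟩
    · exact h
    · exact h u hu
    · exact (h v hv).symm
  have hleG2 : G ≤ modComp Gh M := by
    intro u v h
    by_cases hu : u ∈ M <;> by_cases hv : v ∈ M
    · exact (mc_adj_same (iff_of_true hu hv)).mpr (hle h)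
    · exact (mc_adj_mix hu hv).mpr fun a ha => hle ((hM a ha u hu v hv).mpr h)
    · exact ((mc_adj_mix hv hu).mpr fun a ha => hle ((hM a ha v hv u hu).mpr h.symm)).symm
    · exact (mc_adj_same (iff_of_false hu hv)).mpr (hle h)
  have heq := hmin2 _ hleG2 hG2le (mc_tp htp)
  intro a ha b hb x hx
  rw [← heq, mc_adj_mix ha hx, mc_adj_mix hb hx]
end

section
/- Let G be a graph in which every vertex is contained in some induced P₄ or C₄, and suppose that every non-edge {u,v} of G is a candidate edge of at most k induced P₄'s and C₄'s (a candidate edge of an induced path or cycle v₁v₂v₃v₄ is {v₁,v₃} or {v₂,v₄}). If G admits a trivially perfect completion of size at most k, then |V(G)| ≤ 2k² + 2k. -/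
open scoped Classical

def InducesP4orC4 {V : Type*} (G : SimpleGraph V) (F : Finset V) : Prop :=
  ∃ a b c d : V, (F : Set V) = {a, b, c, d} ∧ (P4At G a b c d ∨ C4At G a b c d)

def IsCandidateOf {V : Type*} (G : SimpleGraph V) (u v : V) (F : Finset V) : Prop :=
  InducesP4orC4 G F ∧ u ∈ F ∧ v ∈ F ∧ u ≠ v ∧ ¬G.Adj u v ∧
    ∃ w ∈ F, G.Adj u w ∧ G.Adj v w


private lemma cand_symm {V : Type*} {G : SimpleGraph V} {u v : V} {F : Finset V}
    (h : IsCandidateOf G u v F) : IsCandidateOf G v u F := by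
  obtain ⟨h1, h2, h3, h4, h5, w, hw, ha, hb⟩ := h
  exact ⟨h1, h3, h2, h4.symm, fun h => h5 h.symm, w, hw, hb, ha⟩

private lemma cand_card {V : Type*} {G : SimpleGraph V} {u v : V} {F : Finset V}
    (h : IsCandidateOf G u v F) : F.card = 4 := by
  classical
  obtain ⟨⟨a, b, c, d, hF, hcase⟩, -⟩ := h
  have hd : a ≠ b ∧ a ≠ c ∧ a ≠ d ∧ b ≠ c ∧ b ≠ d ∧ c ≠ d := by
    rcases hcase with h | h
    · exact ⟨h.1, h.2.1, h.2.2.1, h.2.2.2.1, h.2.2.2.2.1, h.2.2.2.2.2.1⟩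
    · exact ⟨h.1, h.2.1, h.2.2.1, h.2.2.2.1, h.2.2.2.2.1, h.2.2.2.2.2.1⟩
  obtain ⟨h1, h2, h3, h4, h5, h6⟩ := hd
  have hFe : F = {a, b, c, d} := Finset.coe_injective (by rw [hF]; simp)
  rw [hFe]
  rw [Finset.card_insert_of_notMem (by simp [h1, h2, h3]),
    Finset.card_insert_of_notMem (by simp [h4, h5]),
    Finset.card_insert_of_notMem (by simp [h6]), Finset.card_singleton]

theorem stmt13 {V : Type*} [Fintype V] (G : SimpleGraph V) (k : ℕ)
    (hcover : ∀ x : V, ∃ F : Finset V, x ∈ F ∧ InducesP4orC4 G F)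
    (hbound : ∀ u v : V, u ≠ v → ¬G.Adj u v →
      {F : Finset V | IsCandidateOf G u v F}.ncard ≤ k)
    (hyes : ∃ Gh : SimpleGraph V, IsTPCompletion G Gh ∧ (Gh.edgeSet \ G.edgeSet).ncard ≤ k) :
    Fintype.card V ≤ 2 * k ^ 2 + 2 * k := by
  classical
  obtain ⟨Gh, ⟨hle, hTP⟩, hk⟩ := hyes
  have key : ∀ x : V, ∃ (F : Finset V) (u v : V), x ∈ F ∧ IsCandidateOf G u v F ∧
      Gh.Adj u v ∧ ¬G.Adj u v := by
    intro x
    obtain ⟨F, hxF, hind⟩ := hcover x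
    obtain ⟨a, b, c, d, hF, hcase⟩ := id hind
    have haF : a ∈ F := by rw [← Finset.mem_coe, hF]; simp
    have hbF : b ∈ F := by rw [← Finset.mem_coe, hF]; simp
    have hcF : c ∈ F := by rw [← Finset.mem_coe, hF]; simp
    have hdF : d ∈ F := by rw [← Finset.mem_coe, hF]; simp
    rcases hcase with hP | hC
    · obtain ⟨hab, hac, had, hbc, hbd, hcd, Aab, Abc, Acd, nac, nbd, nad⟩ := hP
      by_cases h1 : Gh.Adj a c
      · exact ⟨F, a, c, hxF, ⟨hind, haF, hcF, hac, nac, b, hbF, Aab, Abc.symm⟩, h1, nac⟩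
      by_cases h2 : Gh.Adj b d
      · exact ⟨F, b, d, hxF, ⟨hind, hbF, hdF, hbd, nbd, c, hcF, Abc, Acd.symm⟩, h2, nbd⟩
      exfalso
      by_cases h3 : Gh.Adj a d
      · exact hTP.2 ⟨a, b, c, d, hab, hac, had, hbc, hbd, hcd,
          hle Aab, hle Abc, hle Acd, h3.symm, h1, h2⟩
      · exact hTP.1 ⟨a, b, c, d, hab, hac, had, hbc, hbd, hcd,
          hle Aab, hle Abc, hle Acd, h1, h2, h3⟩
    · obtain ⟨hab, hac, had, hbc, hbd, hcd, Aab, Abc, Acd, Ada, nac, nbd⟩ := hC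
      by_cases h1 : Gh.Adj a c
      · exact ⟨F, a, c, hxF, ⟨hind, haF, hcF, hac, nac, b, hbF, Aab, Abc.symm⟩, h1, nac⟩
      by_cases h2 : Gh.Adj b d
      · exact ⟨F, b, d, hxF, ⟨hind, hbF, hdF, hbd, nbd, c, hcF, Abc, Acd.symm⟩, h2, nbd⟩
      exact absurd ⟨a, b, c, d, hab, hac, had, hbc, hbd, hcd,
        hle Aab, hle Abc, hle Acd, hle Ada, h1, h2⟩ hTP.2
  choose F u v hxF hcand hGh hnadj using key
  have hD : ∀ x, s(u x, v x) ∈ Gh.edgeSet \ G.edgeSet := fun x =>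
    ⟨(hGh x), fun h => hnadj x h⟩
  set D : Finset (Sym2 V) := (Gh.edgeSet \ G.edgeSet).toFinset with hDdef
  have hDcard : D.card ≤ k := by
    rwa [hDdef, ← Set.ncard_eq_toFinset_card']
  have hmem : ∀ x : V, s(u x, v x) ∈ D := fun x => Set.mem_toFinset.mpr (hD x)
  have hsum := Finset.card_eq_sum_card_fiberwise (f := fun x => s(u x, v x))
      (s := Finset.univ) (t := D) (fun x _ => hmem x)
  have hfib : ∀ e ∈ D,
      (Finset.univ.filter fun x => s(u x, v x) = e).card ≤ 2 * k + 2 := by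
    intro e he
    induction e using Sym2.ind with
    | _ u₀ v₀ =>
      have hcand' : ∀ x ∈ (Finset.univ.filter fun x => s(u x, v x) = s(u₀, v₀)),
          IsCandidateOf G u₀ v₀ (F x) := by
        intro x hx
        have hx' := (Finset.mem_filter.mp hx).2
        rcases Sym2.eq_iff.mp hx' with ⟨h1, h2⟩ | ⟨h1, h2⟩
        · rw [← h1, ← h2]; exact hcand x
        · rw [← h1, ← h2]; exact cand_symm (hcand x)
      set C : Finset (Finset V) := {Fi : Finset V | IsCandidateOf G u₀ v₀ Fi}.toFinset
        with hCdef
      have hCcard : C.card ≤ k := by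
        by_cases hne : ∃ Fi, IsCandidateOf G u₀ v₀ Fi
        · obtain ⟨Fi, hFi⟩ := hne
          have := hbound u₀ v₀ hFi.2.2.2.1 hFi.2.2.2.2.1
          rwa [Set.ncard_eq_toFinset_card'] at this
        · have : C = ∅ := by
            rw [hCdef]
            simp only [Finset.eq_empty_iff_forall_notMem, Set.mem_toFinset,
              Set.mem_setOf_eq]
            exact fun Fi hFi => hne ⟨Fi, hFi⟩
          simp [this]
      have hsub : (Finset.univ.filter fun x => s(u x, v x) = s(u₀, v₀)) ⊆
          insert u₀ (insert v₀ (C.biUnion fun Fi => (Fi.erase v₀).erase u₀)) := by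
        intro x hx
        by_cases hxu : x = u₀
        · simp [hxu]
        by_cases hxv : x = v₀
        · simp [hxv]
        simp only [Finset.mem_insert, Finset.mem_biUnion]
        refine Or.inr (Or.inr ⟨F x, ?_, ?_⟩)
        · rw [hCdef, Set.mem_toFinset]; exact hcand' x hx
        · exact Finset.mem_erase.mpr ⟨hxu, Finset.mem_erase.mpr ⟨hxv, hxF x⟩⟩
      calc (Finset.univ.filter fun x => s(u x, v x) = s(u₀, v₀)).card
          ≤ (insert u₀ (insert v₀ (C.biUnion fun Fi => (Fi.erase v₀).erase u₀))).card :=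
            Finset.card_le_card hsub
        _ ≤ (insert v₀ (C.biUnion fun Fi => (Fi.erase v₀).erase u₀)).card + 1 :=
            Finset.card_insert_le _ _
        _ ≤ (C.biUnion fun Fi => (Fi.erase v₀).erase u₀).card + 1 + 1 := by
            have := Finset.card_insert_le v₀ (C.biUnion fun Fi => (Fi.erase v₀).erase u₀)
            omega
        _ ≤ (∑ Fi ∈ C, ((Fi.erase v₀).erase u₀).card) + 2 := by
            have := Finset.card_biUnion_le (s := C)
              (t := fun Fi => (Fi.erase v₀).erase u₀)
            omega
        _ ≤ (∑ _Fi ∈ C, 2) + 2 := by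
            gcongr with Fi hFi
            have hFi' : IsCandidateOf G u₀ v₀ Fi := by
              rw [hCdef, Set.mem_toFinset] at hFi; exact hFi
            have h4 := cand_card hFi'
            have huv : u₀ ≠ v₀ := hFi'.2.2.2.1
            have hu : u₀ ∈ Fi := hFi'.2.1
            have hv : v₀ ∈ Fi := hFi'.2.2.1
            rw [Finset.card_erase_of_mem (Finset.mem_erase.mpr ⟨huv, hu⟩),
              Finset.card_erase_of_mem hv, h4]
        _ = 2 * C.card + 2 := by rw [Finset.sum_const, smul_eq_mul]; ring
        _ ≤ 2 * k + 2 := by omega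
  calc Fintype.card V = Finset.univ.card := (Finset.card_univ).symm
    _ = ∑ e ∈ D, (Finset.univ.filter fun x => s(u x, v x) = e).card := hsum
    _ ≤ ∑ _e ∈ D, (2 * k + 2) := Finset.sum_le_sum hfib
    _ = D.card * (2 * k + 2) := by rw [Finset.sum_const, smul_eq_mul]
    _ ≤ k * (2 * k + 2) := Nat.mul_le_mul_right _ hDcard
    _ = 2 * k ^ 2 + 2 * k := by ring
end

section
/- Every solution to the trivially perfect completion problem contains at least one candidate edge of each induced P₄ and C₄: if v₁v₂v₃v₄ is an induced path or cycle of G, and E₊ is a set of non-edges of G such that G + E₊ has no induced P₄ or C₄, then {v₁,v₃} ∈ E₊ or {v₂,v₄} ∈ E₊. -/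
open scoped Classical

theorem stmt14 {V : Type*} [Fintype V] (G : SimpleGraph V) (v1 v2 v3 v4 : V)
    (hpat : P4At G v1 v2 v3 v4 ∨ C4At G v1 v2 v3 v4)
    (E : Set (Sym2 V)) (hdisj : Disjoint E G.edgeSet)
    (htp : IsTriviallyPerfect (G ⊔ SimpleGraph.fromEdgeSet E)) :
    s(v1, v3) ∈ E ∨ s(v2, v4) ∈ E := by
  by_contra hcon
  push_neg at hcon
  obtain ⟨h13, h24⟩ := hcon
  set G' := G ⊔ SimpleGraph.fromEdgeSet E with hG'
  have adj : ∀ a b : V, G.Adj a b → G'.Adj a b := fun a b hab => Or.inl hab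
  have nadj13 : ¬ G'.Adj v1 v3 := by
    rintro (h | ⟨h, _⟩)
    · rcases hpat with ⟨_,_,_,_,_,_,_,_,_,h',_⟩ | ⟨_,_,_,_,_,_,_,_,_,_,h',_⟩ <;> exact h' h
    · exact h13 h
  have nadj24 : ¬ G'.Adj v2 v4 := by
    rintro (h | ⟨h, _⟩)
    · rcases hpat with ⟨_,_,_,_,_,_,_,_,_,_,h',_⟩ | ⟨_,_,_,_,_,_,_,_,_,_,_,h'⟩ <;> exact h' h
    · exact h24 h
  rcases hpat with ⟨n12,n13,n14,n23,n24,n34,a12,a23,a34,na13,na24,na14⟩ |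
    ⟨n12,n13,n14,n23,n24,n34,a12,a23,a34,a41,na13,na24⟩
  · by_cases h14 : G'.Adj v1 v4
    · exact htp.2 ⟨v1,v2,v3,v4, n12,n13,n14,n23,n24,n34,
        adj _ _ a12, adj _ _ a23, adj _ _ a34, h14.symm, nadj13, nadj24⟩
    · exact htp.1 ⟨v1,v2,v3,v4, n12,n13,n14,n23,n24,n34,
        adj _ _ a12, adj _ _ a23, adj _ _ a34, nadj13, nadj24, h14⟩
  · exact htp.2 ⟨v1,v2,v3,v4, n12,n13,n14,n23,n24,n34,
      adj _ _ a12, adj _ _ a23, adj _ _ a34, adj _ _ a41, nadj13, nadj24⟩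
end
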